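/- arXiv:2007.08057 — 11 statements merged into one kernel-verified Lean document; each statement's English description precedes it below -/
import Mathlib

section
/- Let H = W_k be the wheel on k ≥ 5 vertices with center v_0, i.e., a cycle on k−1 vertices plus a vertex v_0 adjacent to all cycle vertices. Define c(v_0) = k−5 and c(v) = 1 for every other vertex v. Then c is not identically zero and the total cost c(V(H)) = 2(k−3) is at most twice the minimum cost of a hitting set of H, i.e., every hitting set X of H satisfies c(X) ≥ k−3. -/
variable {V : Type*}

/-- The triple (u,v,w) induces a path on 3 vertices (u - v - w) in G. -/
def IsInducedP3 (G : SimpleGraph V) (u v w : V) : Prop :=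
  u ≠ w ∧ G.Adj u v ∧ G.Adj v w ∧ ¬ G.Adj u w

/-- A cluster graph: every connected component is a complete graph. -/
def IsClusterGraph (G : SimpleGraph V) : Prop :=
  ∀ u v : V, u ≠ v → G.Reachable u v → G.Adj u v

/-- X is a hitting set of G: deleting X leaves a cluster graph. -/
def IsHittingSet (G : SimpleGraph V) (X : Set V) : Prop :=
  IsClusterGraph (G.induce Xᶜ)

/-- Minimum cost of a hitting set. -/
noncomputable def OPT (G : SimpleGraph V) (c : V → ℕ) : ℕ :=
  sInf {n | ∃ X : Finset V, IsHittingSet G ↑X ∧ ∑ v ∈ X, c v = n}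

/-- Maximum weight of a clique. -/
noncomputable def omegaW (G : SimpleGraph V) (c : V → ℕ) : ℕ :=
  sSup {n | ∃ K : Finset V, G.IsClique (↑K : Set V) ∧ ∑ v ∈ K, c v = n}

/-- u and u' are true twins within the induced subgraph on A. -/
def TrueTwinsIn (G : SimpleGraph V) (A : Set V) (u u' : V) : Prop :=
  u ∈ A ∧ u' ∈ A ∧ G.Adj u u' ∧
    ∀ w ∈ A, w ≠ u → w ≠ u' → (G.Adj u w ↔ G.Adj u' w)

lemma nbr_two {H : SimpleGraph V} {v0 : V}
    (hreg : ∀ v : V, v ≠ v0 → Nat.card {w : V // w ≠ v0 ∧ H.Adj v w} = 2)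
    {v : V} (hv : v ≠ v0) :
    ∃ a b : V, a ≠ b ∧ {w | w ≠ v0 ∧ H.Adj v w} = {a, b} := by
  rw [← Set.ncard_eq_two, ← Nat.card_coe_set_eq]
  exact hreg v hv

lemma nbr_eq {H : SimpleGraph V} {v0 : V}
    (hreg : ∀ v : V, v ≠ v0 → Nat.card {w : V // w ≠ v0 ∧ H.Adj v w} = 2)
    {v p q : V} (hv : v ≠ v0) (hp : p ≠ v0) (hq : q ≠ v0)
    (hpq : p ≠ q) (h1 : H.Adj v p) (h2 : H.Adj v q) :
    ∀ w, w ≠ v0 → H.Adj v w → w = p ∨ w = q := by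
  obtain ⟨x, y, hxy, hS⟩ := nbr_two hreg hv
  have hpS : p ∈ ({x, y} : Set V) := hS ▸ (show p ∈ {w | w ≠ v0 ∧ H.Adj v w} from ⟨hp, h1⟩)
  have hqS : q ∈ ({x, y} : Set V) := hS ▸ (show q ∈ {w | w ≠ v0 ∧ H.Adj v w} from ⟨hq, h2⟩)
  intro w hw hadj
  have hwS : w ∈ ({x, y} : Set V) := hS ▸ (show w ∈ {w | w ≠ v0 ∧ H.Adj v w} from ⟨hw, hadj⟩)
  simp only [Set.mem_insert_iff, Set.mem_singleton_iff] at hpS hqS hwS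
  rcases hpS with rfl | rfl <;> rcases hqS with rfl | rfl <;> tauto

lemma exists_notin [Fintype V] (s : Finset V) (h : s.card < Fintype.card V) : ∃ w, w ∉ s := by
  by_contra hc
  push_neg at hc
  have hsub : (Finset.univ : Finset V) ⊆ s := fun x _ => hc x
  have := Finset.card_le_card hsub
  rw [Finset.card_univ] at this
  omega

lemma cluster_mid {H : SimpleGraph V} {X : Set V} (hX : IsHittingSet H X)
    {u m w : V} (hu : u ∉ X) (hm : m ∉ X) (hw : w ∉ X) (huw : u ≠ w)
    (h1 : H.Adj u m) (h2 : H.Adj m w) : H.Adj u w := by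
  exact hX ⟨u, hu⟩ ⟨w, hw⟩ (fun h => huw (congrArg Subtype.val h))
    ((SimpleGraph.Adj.reachable (show (H.induce Xᶜ).Adj ⟨u, hu⟩ ⟨m, hm⟩ from h1)).trans
      (SimpleGraph.Adj.reachable (show (H.induce Xᶜ).Adj ⟨m, hm⟩ ⟨w, hw⟩ from h2)))

lemma no_triangle [Fintype V] {H : SimpleGraph V} {v0 : V}
    (hcard5 : 5 ≤ Fintype.card V)
    (hconn : (H.induce ({v0}ᶜ : Set V)).Connected)
    (hreg : ∀ v : V, v ≠ v0 → Nat.card {w : V // w ≠ v0 ∧ H.Adj v w} = 2)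
    {a b c : V} (ha : a ≠ v0) (hb : b ≠ v0) (hc : c ≠ v0)
    (hab : H.Adj a b) (hac : H.Adj a c) (hbc : H.Adj b c) : False := by
  classical
  have hNa := nbr_eq hreg ha hb hc hbc.ne hab hac
  have hNb := nbr_eq hreg hb ha hc hac.ne hab.symm hbc
  have hNc := nbr_eq hreg hc ha hb hab.ne hac.symm hbc.symm
  set T : Set V := {a, b, c} with hT
  have key : ∀ (x y : ({v0}ᶜ : Set V)) (p : (H.induce ({v0}ᶜ : Set V)).Walk x y),
      (x : V) ∈ T → (y : V) ∈ T := by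
    intro x y p
    induction p with
    | nil => exact id
    | @cons x x' y h p ih =>
      intro hx
      apply ih
      have hadj : H.Adj (x : V) (x' : V) := h
      have hx' : (x' : V) ≠ v0 := x'.2
      have hxT : (x : V) = a ∨ (x : V) = b ∨ (x : V) = c := hx
      rcases hxT with hxa | hxb | hxc
      · rcases hNa (x' : V) hx' (hxa ▸ hadj) with h' | h'
        · exact Or.inr (Or.inl h')
        · exact Or.inr (Or.inr h')
      · rcases hNb (x' : V) hx' (hxb ▸ hadj) with h' | h'
        · exact Or.inl h'
        · exact Or.inr (Or.inr h')
      · rcases hNc (x' : V) hx' (hxc ▸ hadj) with h' | h'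
        · exact Or.inl h'
        · exact Or.inr (Or.inl h')
  have h4 : ({v0, a, b, c} : Finset V).card ≤ 4 := by
    refine le_trans (Finset.card_insert_le _ _) (Nat.succ_le_succ ?_)
    refine le_trans (Finset.card_insert_le _ _) (Nat.succ_le_succ ?_)
    refine le_trans (Finset.card_insert_le _ _) (Nat.succ_le_succ ?_)
    simp
  obtain ⟨w, hw⟩ := exists_notin ({v0, a, b, c} : Finset V) (by omega)
  simp only [Finset.mem_insert, Finset.mem_singleton, not_or] at hw
  obtain ⟨hw0, hwa, hwb, hwc⟩ := hw
  have haM : a ∈ ({v0}ᶜ : Set V) := ha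
  have hwM : w ∈ ({v0}ᶜ : Set V) := hw0
  obtain ⟨p⟩ := hconn.preconnected ⟨a, haM⟩ ⟨w, hwM⟩
  have := key _ _ p (Or.inl rfl)
  rcases this with h' | h' | h' <;> simp_all
/-- Wheels on k ≥ 5 vertices are strongly 2-good. Here H is a wheel:
v₀ is universal and H − v₀ is a connected 2-regular graph (a cycle) on k−1 ≥ 4 vertices. -/
theorem stmt_2 [Fintype V] (H : SimpleGraph V) (v0 : V) (k : ℕ) (hk : 5 ≤ k)
    (hcard : Fintype.card V = k)
    (huniv : ∀ v, v ≠ v0 → H.Adj v0 v)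
    (hconn : (H.induce ({v0}ᶜ : Set V)).Connected)
    (hreg : ∀ v : V, v ≠ v0 → Nat.card {w : V // w ≠ v0 ∧ H.Adj v w} = 2)
    (c : V → ℕ) (hc0 : c v0 = k - 5) (hc1 : ∀ v, v ≠ v0 → c v = 1) :
    (∃ v, c v ≠ 0) ∧ (∑ v, c v = 2 * (k - 3)) ∧
      ∀ X : Finset V, IsHittingSet H ↑X → k - 3 ≤ ∑ v ∈ X, c v := by
  classical
  have hcard5 : 5 ≤ Fintype.card V := by omega
  obtain ⟨z, hz⟩ := Fintype.exists_ne_of_one_lt_card (by omega) v0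
  have hRcard : (Finset.univ.erase v0).card = k - 1 := by
    rw [Finset.card_erase_of_mem (Finset.mem_univ _), Finset.card_univ, hcard]
  refine ⟨⟨z, by rw [hc1 z hz]; omega⟩, ?_, ?_⟩
  · rw [← Finset.add_sum_erase _ c (Finset.mem_univ v0)]
    have hsum : ∑ v ∈ Finset.univ.erase v0, c v = (Finset.univ.erase v0).card := by
      rw [Finset.sum_congr rfl (fun v hv => hc1 v (Finset.mem_erase.mp hv).1)]
      simp
    rw [hsum, hRcard, hc0]
    omega
  · intro X hX
    by_cases hv0X : v0 ∈ X
    · -- v0 in X: need at least 2 rim vertices in X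
      have hge2 : 2 ≤ (X.erase v0).card := by
        by_contra hlt
        push_neg at hlt
        have hle : (X.erase v0).card ≤ 1 := by omega
        obtain ⟨s, hs0, hsX⟩ : ∃ s, s ≠ v0 ∧ ∀ x ∈ X, x = v0 ∨ x = s := by
          rcases (X.erase v0).eq_empty_or_nonempty with he | ⟨s, hs⟩
          · exact ⟨z, hz, fun x hx => Or.inl (by
              by_contra h
              exact (Finset.notMem_empty x) (he ▸ Finset.mem_erase.mpr ⟨h, hx⟩))⟩
          · refine ⟨s, (Finset.mem_erase.mp hs).1, fun x hx => ?_⟩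
            by_cases hxv : x = v0
            · exact Or.inl hxv
            · exact Or.inr (Finset.card_le_one.mp hle _ (Finset.mem_erase.mpr ⟨hxv, hx⟩) _ hs)
        obtain ⟨n1, n2, hn12, hNs⟩ := nbr_two hreg hs0
        have h4 : ({v0, s, n1, n2} : Finset V).card ≤ 4 := by
          refine le_trans (Finset.card_insert_le _ _) (Nat.succ_le_succ ?_)
          refine le_trans (Finset.card_insert_le _ _) (Nat.succ_le_succ ?_)
          refine le_trans (Finset.card_insert_le _ _) (Nat.succ_le_succ ?_)
          simp
        obtain ⟨v, hv⟩ := exists_notin ({v0, s, n1, n2} : Finset V) (by omega)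
        simp only [Finset.mem_insert, Finset.mem_singleton, not_or] at hv
        obtain ⟨hv0, hvs, hvn1, hvn2⟩ := hv
        have hnsv : ¬ H.Adj s v := by
          intro h
          have : v ∈ ({n1, n2} : Set V) :=
            hNs ▸ (show v ∈ {w | w ≠ v0 ∧ H.Adj s w} from ⟨hv0, h⟩)
          rcases this with h' | h' <;> simp_all
        obtain ⟨a, b, hab, hNv⟩ := nbr_two hreg hv0
        obtain ⟨ha0, hva⟩ : a ≠ v0 ∧ H.Adj v a :=
          (show a ∈ {w | w ≠ v0 ∧ H.Adj v w} from hNv.symm ▸ Set.mem_insert a {b})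
        obtain ⟨hb0, hvb⟩ : b ≠ v0 ∧ H.Adj v b :=
          (show b ∈ {w | w ≠ v0 ∧ H.Adj v w} from
            hNv.symm ▸ Set.mem_insert_of_mem a (Set.mem_singleton b))
        have has : a ≠ s := fun h => hnsv (h ▸ hva).symm
        have hbs : b ≠ s := fun h => hnsv (h ▸ hvb).symm
        have hanX : a ∉ (↑X : Set V) := fun h => by
          rcases hsX a h with h' | h' <;> [exact ha0 h'; exact has h']
        have hbnX : b ∉ (↑X : Set V) := fun h => by
          rcases hsX b h with h' | h' <;> [exact hb0 h'; exact hbs h']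
        have hvnX : v ∉ (↑X : Set V) := fun h => by
          rcases hsX v h with h' | h' <;> [exact hv0 h'; exact hvs h']
        have hAab : H.Adj a b := cluster_mid hX hanX hvnX hbnX hab hva.symm hvb
        exact no_triangle hcard5 hconn hreg hv0 ha0 hb0 hva hvb hAab
      -- conclude
      rw [← Finset.add_sum_erase _ c hv0X]
      have hsum : ∑ v ∈ X.erase v0, c v = (X.erase v0).card := by
        rw [Finset.sum_congr rfl (fun v hv => hc1 v (Finset.mem_erase.mp hv).1)]
        simp
      rw [hsum, hc0]
      omega
    · -- v0 not in X
      have hXR : X ⊆ Finset.univ.erase v0 := fun x hx =>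
        Finset.mem_erase.mpr ⟨fun h => hv0X (h ▸ hx), Finset.mem_univ x⟩
      have hD : (Finset.univ.erase v0 \ X).card ≤ 2 := by
        by_contra h
        push_neg at h
        obtain ⟨t, hts, htc⟩ := Finset.exists_subset_card_eq (show 3 ≤ _ from h)
        obtain ⟨a, b, d, hab, had, hbd, rfl⟩ := Finset.card_eq_three.mp htc
        have hma := hts (show a ∈ ({a, b, d} : Finset V) by simp)
        have hmb := hts (show b ∈ ({a, b, d} : Finset V) by simp)
        have hmd := hts (show d ∈ ({a, b, d} : Finset V) by simp)
        rw [Finset.mem_sdiff, Finset.mem_erase] at hma hmb hmd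
        obtain ⟨⟨ha0, -⟩, hanX⟩ := hma
        obtain ⟨⟨hb0, -⟩, hbnX⟩ := hmb
        obtain ⟨⟨hd0, -⟩, hdnX⟩ := hmd
        have hv0nX : v0 ∉ (↑X : Set V) := hv0X
        have hAab : H.Adj a b :=
          cluster_mid hX hanX hv0nX hbnX hab (huniv a ha0).symm (huniv b hb0)
        have hAad : H.Adj a d :=
          cluster_mid hX hanX hv0nX hdnX had (huniv a ha0).symm (huniv d hd0)
        have hAbd : H.Adj b d :=
          cluster_mid hX hbnX hv0nX hdnX hbd (huniv b hb0).symm (huniv d hd0)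
        exact no_triangle hcard5 hconn hreg ha0 hb0 hd0 hAab hAad hAbd
      have hsd : (Finset.univ.erase v0 \ X).card = (Finset.univ.erase v0).card - X.card :=
        Finset.card_sdiff_of_subset hXR
      have hXle : X.card ≤ (Finset.univ.erase v0).card := Finset.card_le_card hXR
      have hsum : ∑ v ∈ X, c v = X.card := by
        rw [Finset.sum_congr rfl
          (fun v hv => hc1 v (Finset.mem_erase.mp (hXR hv)).1)]
        simp
      rw [hsum]
      omega
end

section
/- Every chordal graph with no induced 2P_3 contains a hitting set that is a clique, i.e., there exists a clique K such that deleting K leaves a cluster graph. -/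
variable {V : Type*}

/-- G has an induced cycle on n vertices. -/
def HasInducedCycle (G : SimpleGraph V) (n : ℕ) : Prop :=
  ∃ f : ZMod n → V, Function.Injective f ∧
    ∀ i j : ZMod n, G.Adj (f i) (f j) ↔ (j = i + 1 ∨ i = j + 1)

/-- A graph is chordal if it has no induced cycle of length at least 4. -/
def IsChordal (G : SimpleGraph V) : Prop :=
  ∀ n : ℕ, 4 ≤ n → ¬ HasInducedCycle G n

/-- G contains two disjoint, anticomplete induced copies of P₃. -/
def HasInduced2P3 (G : SimpleGraph V) : Prop :=
  ∃ a b c d e f : V, IsInducedP3 G a b c ∧ IsInducedP3 G d e f ∧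
    ∀ x ∈ ({a, b, c} : Set V), ∀ y ∈ ({d, e, f} : Set V), x ≠ y ∧ ¬ G.Adj x y

/-- A chain (walk) of length `k` with all vertices in `A`. -/
def GChain (G : SimpleGraph V) (A : Set V) (k : ℕ) (f : ℕ → V) : Prop :=
  (∀ i ≤ k, f i ∈ A) ∧ ∀ i < k, G.Adj (f i) (f (i+1))

/-- Reachability within a vertex set `A`. -/
def ReachIn (G : SimpleGraph V) (A : Set V) (v w : V) : Prop :=
  ∃ k f, f 0 = v ∧ f k = w ∧ GChain G A k f

theorem reachIn_refl {G : SimpleGraph V} {A : Set V} {v : V} (hv : v ∈ A) :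
    ReachIn G A v v :=
  ⟨0, fun _ => v, rfl, rfl, fun _ _ => hv, fun i hi => absurd hi (by omega)⟩

theorem reachIn_mem_left {G : SimpleGraph V} {A : Set V} {v w : V}
    (h : ReachIn G A v w) : v ∈ A := by
  obtain ⟨k, f, h0, _, hmem, _⟩ := h
  exact h0 ▸ hmem 0 (Nat.zero_le _)

theorem reachIn_mem_right {G : SimpleGraph V} {A : Set V} {v w : V}
    (h : ReachIn G A v w) : w ∈ A := by
  obtain ⟨k, f, _, hk, hmem, _⟩ := h
  exact hk ▸ hmem k le_rfl

theorem reachIn_symm {G : SimpleGraph V} {A : Set V} {v w : V}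
    (h : ReachIn G A v w) : ReachIn G A w v := by
  obtain ⟨k, f, h0, hk, hmem, hadj⟩ := h
  refine ⟨k, fun i => f (k - i), by simpa using hk, by simpa using h0,
    fun i _ => hmem (k - i) (by omega), fun i hi => ?_⟩
  show G.Adj (f (k - i)) (f (k - (i+1)))
  have e : k - i = (k - (i+1)) + 1 := by omega
  rw [e]
  exact (hadj (k - (i+1)) (by omega)).symm

theorem reachIn_trans {G : SimpleGraph V} {A : Set V} {u v w : V}
    (h1 : ReachIn G A u v) (h2 : ReachIn G A v w) : ReachIn G A u w := by
  obtain ⟨k1, f1, h10, h1k, h1mem, h1adj⟩ := h1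
  obtain ⟨k2, f2, h20, h2k, h2mem, h2adj⟩ := h2
  refine ⟨k1 + k2, fun i => if i ≤ k1 then f1 i else f2 (i - k1), by simp [h10],
    ?_, fun i hi => ?_, fun i hi => ?_⟩
  · by_cases h : k2 = 0
    · subst h; simp only [Nat.add_zero, le_refl, if_pos]
      rw [h1k, ← h2k, ← h20]
    · have : ¬ (k1 + k2 ≤ k1) := by omega
      simp only [this, if_false]
      simpa using h2k
  · by_cases h : i ≤ k1
    · simp only [h, if_pos]; exact h1mem i h
    · simp only [h, if_neg, if_false]; exact h2mem (i - k1) (by omega)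
  · by_cases h : i + 1 ≤ k1
    · simp only [h, if_pos, show i ≤ k1 by omega, if_pos]
      exact h1adj i (by omega)
    · by_cases h' : i ≤ k1
      · have hik : i = k1 := by omega
        simp only [h', if_pos, h, if_neg, if_false]
        subst hik
        have : f1 i = f2 0 := by rw [h1k, h20]
        rw [this]
        have e : i + 1 - i = 1 := by omega
        rw [e]
        exact h2adj 0 (by omega)
      · simp only [h', h, if_neg, if_false]
        have e : i + 1 - k1 = (i - k1) + 1 := by omega
        rw [e]
        exact h2adj (i - k1) (by omega)

theorem reachIn_adj {G : SimpleGraph V} {A : Set V} {v w : V}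
    (hv : v ∈ A) (hw : w ∈ A) (h : G.Adj v w) : ReachIn G A v w := by
  refine ⟨1, fun i => if i = 0 then v else w, by simp, by simp, fun i _ => ?_, fun i hi => ?_⟩
  · by_cases h0 : i = 0 <;> simp [h0, hv, hw]
  · have : i = 0 := by omega
    simp [this, h]

/-- A member of a component can reach the base point through the component itself. -/
theorem reachIn_comp {G : SimpleGraph V} {A : Set V} {v a : V}
    (h : ReachIn G A v a) : ReachIn G {w | ReachIn G A w a} v a := by
  obtain ⟨k, f, h0, hk, hmem, hadj⟩ := h
  refine ⟨k, f, h0, hk, fun i hik => ?_, hadj⟩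
  refine ⟨k - i, fun m => f (i + m), by simp, ?_, fun m hm => hmem _ (by omega), fun m hm => ?_⟩
  · show f (i + (k - i)) = a
    have e : i + (k - i) = k := by omega
    rw [e, hk]
  · exact hadj (i + m) (by omega)

/-- Build an induced cycle from explicit data on `ℕ`. -/
theorem hasInducedCycle_of (G : SimpleGraph V) {m : ℕ} (hm : 4 ≤ m) (g : ℕ → V)
    (hinj : ∀ i j, i < j → j < m → g i ≠ g j)
    (hadj : ∀ i, i + 1 < m → G.Adj (g i) (g (i+1)))
    (hlast : G.Adj (g (m-1)) (g 0))
    (hnon : ∀ i j, i + 1 < j → j < m → ¬(i = 0 ∧ j = m - 1) → ¬ G.Adj (g i) (g j)) :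
    HasInducedCycle G m := by
  haveI : NeZero m := ⟨by omega⟩
  haveI : Fact (1 < m) := ⟨by omega⟩
  refine ⟨fun a => g a.val, ?_, ?_⟩
  · intro x y hxy
    apply ZMod.val_injective m
    by_contra hne
    rcases Nat.lt_trichotomy x.val y.val with h | h | h
    · exact hinj _ _ h (ZMod.val_lt y) hxy
    · exact hne h
    · exact hinj _ _ h (ZMod.val_lt x) hxy.symm
  · intro x y
    have hx := ZMod.val_lt x
    have hy := ZMod.val_lt y
    have hval : ∀ a b : ZMod m, b = a + 1 ↔ b.val = (a.val + 1) % m := by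
      intro a b
      rw [← (ZMod.val_injective m).eq_iff, ZMod.val_add, ZMod.val_one]
    show G.Adj (g x.val) (g y.val) ↔ (y = x + 1 ∨ x = y + 1)
    rw [hval, hval]
    have hm0 : (m - 1 + 1) % m = 0 := by
      rw [Nat.sub_add_cancel (by omega)]; exact Nat.mod_self m
    constructor
    · intro h
      by_contra hcon
      push_neg at hcon
      obtain ⟨h1, h2⟩ := hcon
      rcases Nat.lt_trichotomy x.val y.val with hij | hij | hij
      · have hj1 : y.val ≠ x.val + 1 := by
          intro e; apply h1; rw [e]; exact (Nat.mod_eq_of_lt (by omega)).symm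
        have hij2 : x.val + 1 < y.val := by omega
        by_cases hc : x.val = 0 ∧ y.val = m - 1
        · apply h2; rw [hc.1, hc.2, hm0]
        · exact hnon x.val y.val hij2 hy hc h
      · rw [hij] at h; exact G.irrefl h
      · have hi1 : x.val ≠ y.val + 1 := by
          intro e; apply h2; rw [e]; exact (Nat.mod_eq_of_lt (by omega)).symm
        have hij2 : y.val + 1 < x.val := by omega
        by_cases hc : y.val = 0 ∧ x.val = m - 1
        · apply h1; rw [hc.1, hc.2, hm0]
        · exact hnon y.val x.val hij2 hx hc h.symm
    · intro h
      rcases h with h | h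
      · rcases Nat.lt_or_ge (x.val + 1) m with h' | h'
        · rw [Nat.mod_eq_of_lt h'] at h
          rw [h]; exact hadj x.val (by omega)
        · have hi1 : x.val = m - 1 := by omega
          have hj0 : y.val = 0 := by rw [h, hi1, hm0]
          rw [hj0, hi1]; exact hlast
      · rcases Nat.lt_or_ge (y.val + 1) m with h' | h'
        · rw [Nat.mod_eq_of_lt h'] at h
          rw [h]; exact (hadj y.val (by omega)).symm
        · have hj1 : y.val = m - 1 := by omega
          have hi0 : x.val = 0 := by rw [h, hj1, hm0]
          rw [hi0, hj1]; exact hlast.symm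

theorem gchain_restrict {G : SimpleGraph V} {A : Set V} {k k' : ℕ} {f : ℕ → V}
    (h : GChain G A k f) (hk : k' ≤ k) : GChain G A k' f :=
  ⟨fun i hi => h.1 i (le_trans hi hk), fun i hi => h.2 i (lt_of_lt_of_le hi hk)⟩

/-- Dirac-type lemma: in a chordal graph, if `C` is connected and its boundary-clique
is `S`, then some vertex of `C` is adjacent to all of `S`. -/
theorem lemA (G : SimpleGraph V) (hch : IsChordal G) (C S : Set V) {x : V}
    (hx : x ∈ C)
    (hconn : ∀ v ∈ C, ∀ w ∈ C, ReachIn G C v w)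
    (hSmem : ∀ s ∈ S, s ∉ C ∧ ∃ p ∈ C, G.Adj p s)
    (hScl : G.IsClique S) (hSfin : S.Finite) :
    ∃ u ∈ C, ∀ s ∈ S, G.Adj u s := by
  classical
  suffices H : ∀ T : Finset V, ↑T ⊆ S → ∃ u ∈ C, ∀ t ∈ T, G.Adj u t by
    obtain ⟨u, hu, hadj⟩ := H hSfin.toFinset (by simp)
    exact ⟨u, hu, fun s hs => hadj s (hSfin.mem_toFinset.2 hs)⟩
  intro T
  induction T using Finset.induction_on with
  | empty => exact fun _ => ⟨x, hx, by simp⟩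
  | @insert s T' hsT' ih =>
    intro hsub
    have hT'sub : ↑T' ⊆ S := fun t ht => hsub (Finset.mem_insert_of_mem ht)
    have hsS : s ∈ S := hsub (Finset.mem_insert_self s T')
    obtain ⟨u, huC, huT⟩ := ih hT'sub
    by_cases hus : G.Adj u s
    · refine ⟨u, huC, fun t ht => ?_⟩
      rcases Finset.mem_insert.1 ht with rfl | ht
      · exact hus
      · exact huT t ht
    · obtain ⟨hsC, p₀, hp₀C, hp₀s⟩ := hSmem s hsS
      set M : Set ℕ := {k | ∃ f : ℕ → V, f 0 = u ∧ GChain G C k f ∧ G.Adj (f k) s} with hM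
      have hMne : M.Nonempty := by
        obtain ⟨k0, f0, h00, h0k, hch0⟩ := hconn u huC p₀ hp₀C
        exact ⟨k0, f0, h00, hch0, h0k ▸ hp₀s⟩
      obtain ⟨f, hf0, hfch, hfks⟩ := Nat.sInf_mem hMne
      set k := sInf M with hk
      have hmin : ∀ n < k, n ∉ M := fun n hn hnM => absurd (Nat.sInf_le hnM) (by omega)
      have hk1 : 1 ≤ k := by
        rcases Nat.eq_zero_or_pos k with h0 | h0
        · exfalso; apply hus; rw [← hf0]
          have : f k = f 0 := by rw [h0]
          rw [← this]; exact hfks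
        · exact h0
      have hF1 : ∀ i < k, ¬ G.Adj (f i) s := by
        intro i hik hadj
        exact hmin i hik ⟨f, hf0, gchain_restrict hfch (by omega), hadj⟩
      have hinj : ∀ i j, i < j → j ≤ k → f i ≠ f j := by
        intro i j hij hjk heq
        by_cases hjk' : j = k
        · apply hF1 i (by omega)
          rw [heq, hjk']; exact hfks
        · have hjk2 : j < k := by omega
          apply hmin (k - (j - i)) (by omega)
          refine ⟨fun n => if n ≤ i then f n else f (n + (j - i)), by simp [hf0],
            ⟨fun n hn => ?_, fun n hn => ?_⟩, ?_⟩
          · by_cases h : n ≤ i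
            · simp only [h, if_pos]; exact hfch.1 n (by omega)
            · simp only [h, if_neg, if_false]; exact hfch.1 _ (by omega)
          · rcases Nat.lt_trichotomy n i with h | h | h
            · simp only [show n ≤ i by omega, if_pos, show n + 1 ≤ i by omega]
              exact hfch.2 n (by omega)
            · subst h
              simp only [le_refl, if_pos, show ¬ (n + 1 ≤ n) by omega, if_neg, if_false]
              have e : n + 1 + (j - n) = j + 1 := by omega
              rw [e, heq]
              exact hfch.2 j (by omega)
            · simp only [show ¬ (n ≤ i) by omega, show ¬ (n + 1 ≤ i) by omega,
                if_neg, if_false]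
              have e : n + 1 + (j - i) = (n + (j - i)) + 1 := by omega
              rw [e]
              exact hfch.2 (n + (j - i)) (by omega)
          · have h1 : ¬ (k - (j - i) ≤ i) := by omega
            simp only [h1, if_neg, if_false]
            have e : k - (j - i) + (j - i) = k := by omega
            rw [e]; exact hfks
      have hnonadj : ∀ i j, i + 1 < j → j ≤ k → ¬ G.Adj (f i) (f j) := by
        intro i j hij hjk hadj
        apply hmin (k - (j - i - 1)) (by omega)
        refine ⟨fun n => if n ≤ i then f n else f (n + (j - i - 1)), by simp [hf0],
          ⟨fun n hn => ?_, fun n hn => ?_⟩, ?_⟩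
        · by_cases h : n ≤ i
          · simp only [h, if_pos]; exact hfch.1 n (by omega)
          · simp only [h, if_neg, if_false]; exact hfch.1 _ (by omega)
        · rcases Nat.lt_trichotomy n i with h | h | h
          · simp only [show n ≤ i by omega, if_pos, show n + 1 ≤ i by omega]
            exact hfch.2 n (by omega)
          · subst h
            simp only [le_refl, if_pos, show ¬ (n + 1 ≤ n) by omega, if_neg, if_false]
            have e : n + 1 + (j - n - 1) = j := by omega
            rw [e]
            exact hadj
          · simp only [show ¬ (n ≤ i) by omega, show ¬ (n + 1 ≤ i) by omega,
              if_neg, if_false]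
            have e : n + 1 + (j - i - 1) = (n + (j - i - 1)) + 1 := by omega
            rw [e]
            exact hfch.2 (n + (j - i - 1)) (by omega)
        · have h1 : ¬ (k - (j - i - 1) ≤ i) := by omega
          simp only [h1, if_neg, if_false]
          have e : k - (j - i - 1) + (j - i - 1) = k := by omega
          rw [e]; exact hfks
      have hfkC : f k ∈ C := hfch.1 k le_rfl
      have hkey : ∀ t ∈ T', G.Adj (f k) t := by
        intro t htT'
        have htS : t ∈ S := hT'sub htT'
        have hts : t ≠ s := fun h => hsT' (h ▸ htT')
        have hAdj_ts : G.Adj t s := hScl htS hsS hts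
        have htu : G.Adj t u := (huT t htT').symm
        have htC : t ∉ C := (hSmem t htS).1
        set P : ℕ → Prop := fun i => G.Adj t (f i) with hP
        have hP0 : P 0 := by rw [hP]; simp only [hf0]; exact htu
        set i0 := Nat.findGreatest P k with hi0def
        have hi0 : P i0 := Nat.findGreatest_spec (Nat.zero_le k) hP0
        have hi0k : i0 ≤ k := Nat.findGreatest_le k
        by_contra hfk_t
        have hi0k' : i0 < k := by
          rcases Nat.lt_or_ge i0 k with h | h
          · exact h
          · exfalso; apply hfk_t
            have : i0 = k := by omega
            rw [this] at hi0
            exact hi0.symm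
        have hmax : ∀ j, i0 < j → j ≤ k → ¬ P j := fun j h1 h2 =>
          Nat.findGreatest_is_greatest h1 h2
        set m := k - i0 + 3 with hm'
        have hm4 : 4 ≤ m := by omega
        apply hch m hm4
        set g : ℕ → V := fun r => if r = 0 then t else if r = m - 1 then s
          else f (i0 + r - 1) with hg
        have hgmid : ∀ r, 1 ≤ r → r ≤ m - 2 → g r = f (i0 + r - 1) := by
          intro r h1 h2
          simp only [hg, show r ≠ 0 by omega, show r ≠ m - 1 by omega, if_neg, if_false]
        have hmidC : ∀ r, 1 ≤ r → r ≤ m - 2 → g r ∈ C := by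
          intro r h1 h2
          rw [hgmid r h1 h2]
          exact hfch.1 _ (by omega)
        apply hasInducedCycle_of G hm4 g
        · -- injectivity
          intro i j hij hjm heq
          have hg0 : g 0 = t := by simp [hg]
          have hgm1 : g (m-1) = s := by simp [hg, show m - 1 ≠ 0 by omega]
          rcases Nat.eq_zero_or_pos i with rfl | hi1
          · rcases Nat.lt_or_ge j (m-1) with hj2 | hj2
            · have hjC := hmidC j (by omega) (by omega)
              rw [← heq, hg0] at hjC
              exact htC hjC
            · have : j = m - 1 := by omega
              rw [hg0, this, hgm1] at heq
              rw [heq] at htu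
              exact hus htu.symm
          · rcases Nat.lt_or_ge j (m-1) with hj2 | hj2
            · rw [hgmid i (by omega) (by omega), hgmid j (by omega) (by omega)] at heq
              exact hinj (i0 + i - 1) (i0 + j - 1) (by omega) (by omega) heq
            · have : j = m - 1 := by omega
              rw [this, hgm1, hgmid i (by omega) (by omega)] at heq
              have hiC := hfch.1 (i0 + i - 1) (by omega : i0 + i - 1 ≤ k)
              rw [heq] at hiC
              exact hsC hiC
        · -- consecutive adjacency
          intro i hi
          rcases Nat.eq_zero_or_pos i with rfl | hi1
          · have hg0 : g 0 = t := by simp [hg]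
            rw [hg0, hgmid 1 le_rfl (by omega)]
            simpa using hi0
          · rcases Nat.lt_or_ge (i+1) (m-1) with hi2 | hi2
            · rw [hgmid i (by omega) (by omega), hgmid (i+1) (by omega) (by omega)]
              have e : i0 + (i+1) - 1 = (i0 + i - 1) + 1 := by omega
              rw [e]
              exact hfch.2 (i0 + i - 1) (by omega)
            · have hieq : i + 1 = m - 1 := by omega
              have hgm1 : g (m-1) = s := by simp [hg, show m - 1 ≠ 0 by omega]
              rw [hieq, hgm1, hgmid i (by omega) (by omega)]
              have e : i0 + i - 1 = k := by omega
              rw [e]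
              exact hfks
        · -- wrap-around edge
          have hg0 : g 0 = t := by simp [hg]
          have hgm1 : g (m-1) = s := by simp [hg, show m - 1 ≠ 0 by omega]
          rw [hg0, hgm1]
          exact hAdj_ts.symm
        · -- non-adjacency
          intro i j hij hjm hnotc hadj2
          have hg0 : g 0 = t := by simp [hg]
          have hgm1 : g (m-1) = s := by simp [hg, show m - 1 ≠ 0 by omega]
          rcases Nat.eq_zero_or_pos i with rfl | hi1
          · rcases Nat.lt_or_ge j (m-1) with hj2 | hj2
            · rw [hg0, hgmid j (by omega) (by omega)] at hadj2
              exact hmax (i0 + j - 1) (by omega) (by omega) hadj2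
            · exact hnotc ⟨rfl, by omega⟩
          · rcases Nat.lt_or_ge j (m-1) with hj2 | hj2
            · rw [hgmid i (by omega) (by omega), hgmid j (by omega) (by omega)] at hadj2
              exact hnonadj (i0 + i - 1) (i0 + j - 1) (by omega) (by omega) hadj2
            · have : j = m - 1 := by omega
              rw [this, hgm1, hgmid i (by omega) (by omega)] at hadj2
              exact hF1 (i0 + i - 1) (by omega) hadj2
      refine ⟨f k, hfkC, fun t ht => ?_⟩
      rcases Finset.mem_insert.1 ht with rfl | ht
      · exact hfks
      · exact hkey t ht

theorem cluster_of_noP3 (G : SimpleGraph V) (K : Set V)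
    (h : ∀ a b c, IsInducedP3 G a b c → a ∈ K ∨ b ∈ K ∨ c ∈ K) :
    IsHittingSet G K := by
  have aux : ∀ (p q : ↥Kᶜ) (w : (G.induce Kᶜ).Walk p q), p ≠ q → (G.induce Kᶜ).Adj p q := by
    intro p q w
    induction w with
    | nil => intro hne; exact absurd rfl hne
    | @cons p' m q' ha pw ih =>
      intro hne
      by_cases hmq : m = q'
      · exact hmq ▸ ha
      · have hmadj := ih hmq
        by_cases hpq : (G.induce Kᶜ).Adj p' q'
        · exact hpq
        · exfalso
          have hP3 : IsInducedP3 G ↑p' ↑m ↑q' := by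
            refine ⟨fun hh => hne (Subtype.ext hh), ha, hmadj, hpq⟩
          rcases h _ _ _ hP3 with hc | hc | hc
          · exact p'.2 hc
          · exact m.2 hc
          · exact q'.2 hc
  intro p q hne hr
  obtain ⟨w⟩ := hr
  exact aux p q w hne

/-- Every chordal, 2P₃-free graph contains a hitting clique. -/
theorem stmt_4 [Fintype V] (G : SimpleGraph V)
    (hchordal : IsChordal G) (h2p3 : ¬ HasInduced2P3 G) :
    ∃ K : Set V, G.IsClique K ∧ IsHittingSet G K := by
  classical
  suffices h : ∃ K : Set V, G.IsClique K ∧ ∀ a b c, IsInducedP3 G a b c → a ∈ K ∨ b ∈ K ∨ c ∈ K by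
    obtain ⟨K, hK, hhit⟩ := h
    exact ⟨K, hK, cluster_of_noP3 G K hhit⟩
  set R : Set V → Set V := fun K =>
    {v | ∃ a b c, IsInducedP3 G a b c ∧ a ∉ K ∧ b ∉ K ∧ c ∉ K ∧ ReachIn G Kᶜ v a} with hR
  set N : Set ℕ := {n | ∃ K : Set V, G.IsClique K ∧ (R K).ncard = n} with hN
  have hNne : N.Nonempty := ⟨(R ∅).ncard, ∅, by simp, rfl⟩
  obtain ⟨K₀, hK₀cl, hK₀card⟩ := Nat.sInf_mem hNne
  have hminim : ∀ K : Set V, G.IsClique K → (R K₀).ncard ≤ (R K).ncard := by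
    intro K hK
    rw [hK₀card]
    exact Nat.sInf_le ⟨K, hK, rfl⟩
  by_cases hR0 : R K₀ = ∅
  · refine ⟨K₀, hK₀cl, fun a b c hP3 => ?_⟩
    by_contra hn
    push_neg at hn
    obtain ⟨ha, hb, hc⟩ := hn
    have : a ∈ R K₀ := ⟨a, b, c, hP3, ha, hb, hc, reachIn_refl ha⟩
    rw [hR0] at this
    exact this
  · exfalso
    obtain ⟨v₀, hv₀⟩ := Set.nonempty_iff_ne_empty.mpr hR0
    obtain ⟨a, b, c, hP3, haK, hbK, hcK, _⟩ := hv₀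
    set C : Set V := {v | ReachIn G K₀ᶜ v a} with hC
    have haC : a ∈ C := reachIn_refl haK
    have hCsub : C ⊆ K₀ᶜ := fun v hv => reachIn_mem_left hv
    have hclose : ∀ p ∈ C, ∀ q, G.Adj p q → q ∉ K₀ → q ∈ C := by
      intro p hp q hadj hq
      exact reachIn_trans (reachIn_adj hq (hCsub hp) hadj.symm) hp
    have hbC : b ∈ C := hclose a haC b hP3.2.1 hbK
    have hcC : c ∈ C := hclose b hbC c hP3.2.2.1 hcK
    set S : Set V := {s | s ∉ C ∧ ∃ p ∈ C, G.Adj p s} with hS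
    have hSK : S ⊆ K₀ := by
      rintro s ⟨hsC, p, hpC, hps⟩
      by_contra hsK
      exact hsC (hclose p hpC s hps hsK)
    have hScl : G.IsClique S := hK₀cl.subset hSK
    have hcomp : ∀ v ∈ C, ReachIn G C v a := fun v hv => reachIn_comp hv
    have hconn : ∀ v ∈ C, ∀ w ∈ C, ReachIn G C v w := fun v hv w hw =>
      reachIn_trans (hcomp v hv) (reachIn_symm (hcomp w hw))
    obtain ⟨u, huC, huS⟩ := lemA G hchordal C S haC hconn (fun s hs => hs) hScl (Set.toFinite S)
    set K' : Set V := insert u S with hK'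
    have hK'cl : G.IsClique K' := hScl.insert (fun s hsS _ => huS s hsS)
    have huK' : u ∈ K' := Set.mem_insert u S
    have hSsubK' : S ⊆ K' := Set.subset_insert u S
    have hclose' : ∀ p ∈ C, ∀ q, G.Adj p q → q ∉ K' → q ∈ C \ {u} := by
      intro p hp q hadj hq
      have hqC : q ∈ C := by
        by_contra hqC
        exact hq (hSsubK' ⟨hqC, p, hp, hadj⟩)
      exact ⟨hqC, fun h => hq (h ▸ huK')⟩
    have hsubset : R K' ⊆ C \ {u} := by
      rintro v ⟨a', b', c', hP3', ha', hb', hc', hr'⟩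
      have ha'Cu : a' ∈ C \ {u} := by
        by_cases hcase : a' ∈ C ∨ b' ∈ C ∨ c' ∈ C
        · rcases hcase with h | h | h
          · exact ⟨h, fun he => ha' (he ▸ huK')⟩
          · exact hclose' b' h a' hP3'.2.1.symm ha'
          · have hb'C : b' ∈ C := (hclose' c' h b' hP3'.2.2.1.symm hb').1
            exact hclose' b' hb'C a' hP3'.2.1.symm ha'
        · push_neg at hcase
          obtain ⟨ha'C, hb'C, hc'C⟩ := hcase
          exfalso
          apply h2p3
          refine ⟨a, b, c, a', b', c', hP3, hP3', ?_⟩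
          have key : ∀ p, p ∈ C → ∀ q, q ∉ C → q ∉ K' → p ≠ q ∧ ¬ G.Adj p q := by
            intro p hp q hqC hqK'
            refine ⟨fun he => hqC (he ▸ hp), fun hadj => ?_⟩
            exact hqK' (hSsubK' ⟨hqC, p, hp, hadj⟩)
          intro y hy z hz
          have hyC : y ∈ C := by
            rcases hy with rfl | rfl | rfl
            · exact haC
            · exact hbC
            · exact hcC
          have hz' : z ∉ C ∧ z ∉ K' := by
            rcases hz with rfl | rfl | rfl
            · exact ⟨ha'C, ha'⟩
            · exact ⟨hb'C, hb'⟩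
            · exact ⟨hc'C, hc'⟩
          exact key y hyC z hz'.1 hz'.2
      obtain ⟨k, f, hf0, hfk, hfmem, hfadj⟩ := reachIn_symm hr'
      have hstep : ∀ i ≤ k, f i ∈ C \ {u} := by
        intro i
        induction i with
        | zero => intro _; rw [hf0]; exact ha'Cu
        | succ n ihn =>
          intro hnk
          exact hclose' (f n) (ihn (by omega)).1 (f (n+1)) (hfadj n (by omega))
            (hfmem (n+1) hnk)
      rw [← hfk]
      exact hstep k le_rfl
    have hCsubR : C ⊆ R K₀ := fun v hv => ⟨a, b, c, hP3, haK, hbK, hcK, hv⟩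
    have huR : u ∈ R K₀ := hCsubR huC
    have hsub2 : R K' ⊆ R K₀ := fun v hv => hCsubR (hsubset hv).1
    have hss : R K' ⊂ R K₀ :=
      (Set.ssubset_iff_of_subset hsub2).mpr ⟨u, huR, fun hu' => (hsubset hu').2 rfl⟩
    have hlt := Set.ncard_lt_ncard hss (Set.toFinite _)
    exact absurd (hminim K' hK'cl) (by omega)
end

section
/- Let H be a graph with a universal vertex v_0 and H' = H − v_0. Then the minimum cost OPT(H,c) of a hitting set of H equals the minimum of c(v_0) + OPT(H', c|_{H'}) and c(V(H')) − ω(H', c|_{H'}), where ω denotes the maximum weight of a clique. -/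
variable {V : Type*}

lemma opt_mem {W : Type*} [Fintype W] [DecidableEq W] (G : SimpleGraph W) (c : W → ℕ) :
    ∃ X : Finset W, IsHittingSet G ↑X ∧ ∑ v ∈ X, c v = OPT G c := by
  have hne : {n | ∃ X : Finset W, IsHittingSet G ↑X ∧ ∑ v ∈ X, c v = n}.Nonempty := by
    refine ⟨∑ v ∈ Finset.univ, c v, Finset.univ, ?_, rfl⟩
    intro u v _ _
    exact absurd (Finset.mem_coe.2 (Finset.mem_univ u.1)) u.2
  exact Nat.sInf_mem hne

lemma opt_le {W : Type*} [Fintype W] [DecidableEq W] (G : SimpleGraph W) (c : W → ℕ)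
    (X : Finset W) (hX : IsHittingSet G ↑X) : OPT G c ≤ ∑ v ∈ X, c v :=
  Nat.sInf_le ⟨X, hX, rfl⟩

lemma omega_bddAbove {W : Type*} [Fintype W] (G : SimpleGraph W) (c : W → ℕ) :
    BddAbove {n | ∃ K : Finset W, G.IsClique (↑K : Set W) ∧ ∑ v ∈ K, c v = n} :=
  ⟨∑ v, c v, fun _ ⟨K, _, h⟩ => h ▸ Finset.sum_le_sum_of_subset (Finset.subset_univ K)⟩

lemma omega_mem {W : Type*} [Fintype W] (G : SimpleGraph W) (c : W → ℕ) :
    ∃ K : Finset W, G.IsClique (↑K : Set W) ∧ ∑ v ∈ K, c v = omegaW G c := by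
  have h0 : (0:ℕ) ∈ {n | ∃ K : Finset W, G.IsClique (↑K : Set W) ∧ ∑ v ∈ K, c v = n} :=
    ⟨∅, by simp, by simp⟩
  exact Nat.sSup_mem ⟨0, h0⟩ (omega_bddAbove G c)

lemma sum_le_omega {W : Type*} [Fintype W] (G : SimpleGraph W) (c : W → ℕ) (K : Finset W)
    (hK : G.IsClique (↑K : Set W)) : ∑ v ∈ K, c v ≤ omegaW G c :=
  le_csSup (omega_bddAbove G c) ⟨K, hK, rfl⟩

/-- If v₀ is universal in H and H' = H − v₀, then
OPT(H,c) = min( c(v₀) + OPT(H',c') , c(V(H')) − ω(H',c') ). -/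
theorem stmt_5 [Fintype V] [DecidableEq V] (H : SimpleGraph V) (v0 : V)
    (huniv : ∀ v, v ≠ v0 → H.Adj v0 v) (c : V → ℕ) :
    OPT H c =
      min (c v0 + OPT (H.comap (Subtype.val : {v : V // v ≠ v0} → V)) (fun v => c v.1))
        ((∑ v : {v : V // v ≠ v0}, c v.1) -
          omegaW (H.comap (Subtype.val : {v : V // v ≠ v0} → V)) (fun v => c v.1)) := by
  set H' := H.comap (Subtype.val : {v : V // v ≠ v0} → V) with hH'
  set c' : {v : V // v ≠ v0} → ℕ := fun v => c v.1 with hc'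
  apply le_antisymm
  · apply le_min
    · -- OPT H c ≤ c v0 + OPT H' c'
      obtain ⟨X', hX', hsum⟩ := opt_mem H' c'
      set X : Finset V := insert v0 (X'.image Subtype.val) with hXdef
      have hv0ne : ∀ u : {v : V // v ∈ (↑X : Set V)ᶜ}, u.1 ≠ v0 := by
        intro u h
        exact u.2 (by simp [hXdef, h])
      have hnotin : ∀ u : {v : V // v ∈ (↑X : Set V)ᶜ}, (⟨u.1, hv0ne u⟩ : {v : V // v ≠ v0}) ∉ X' := by
        intro u h
        exact u.2 (by simp only [hXdef, Finset.coe_insert, Set.mem_insert_iff, Finset.coe_image,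
          Set.mem_image, Finset.mem_coe]; exact Or.inr ⟨_, h, rfl⟩)
      have hhit : IsHittingSet H ↑X := by
        intro u v hne hreach
        let f : H.induce (↑X : Set V)ᶜ →g H'.induce (↑X' : Set {v : V // v ≠ v0})ᶜ :=
          ⟨fun u => ⟨⟨u.1, hv0ne u⟩, hnotin u⟩, fun {a b} h => h⟩
        have hfne : f u ≠ f v := by
          intro h
          exact hne (Subtype.ext (congrArg (fun x => x.1.1) h))
        exact hX' (f u) (f v) hfne (hreach.map f)
      have hsumX : ∑ v ∈ X, c v = c v0 + OPT H' c' := by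
        rw [hXdef, Finset.sum_insert (by
          simp only [Finset.mem_image, not_exists, not_and]
          intro x _ h
          exact x.2 h), Finset.sum_image (fun a _ b _ h => Subtype.ext h), hsum]
      calc OPT H c ≤ ∑ v ∈ X, c v := opt_le H c X hhit
        _ = _ := hsumX
    · -- OPT H c ≤ ∑ − ω
      obtain ⟨K, hK, hsum⟩ := omega_mem H' c'
      set X : Finset V := Kᶜ.image Subtype.val with hXdef
      have hmem : ∀ u : {v : V // v ∈ (↑X : Set V)ᶜ}, ∀ h : u.1 ≠ v0,
          (⟨u.1, h⟩ : {v : V // v ≠ v0}) ∈ K := by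
        intro u h
        by_contra hk
        exact u.2 (by
          simp only [hXdef, Finset.coe_image, Set.mem_image, Finset.mem_coe]
          exact ⟨⟨u.1, h⟩, Finset.mem_compl.2 hk, rfl⟩)
      have hhit : IsHittingSet H ↑X := by
        intro u v hne _
        show H.Adj u.1 v.1
        have hvalne : u.1 ≠ v.1 := fun h => hne (Subtype.ext h)
        by_cases hu : u.1 = v0
        · rw [hu]; exact huniv v.1 (hu ▸ hvalne.symm)
        · by_cases hv : v.1 = v0
          · rw [hv]; exact (huniv u.1 (hv ▸ hvalne)).symm
          · exact hK (Finset.mem_coe.2 (hmem u hu)) (Finset.mem_coe.2 (hmem v hv))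
              (fun h => hvalne (congrArg (fun x : {v : V // v ≠ v0} => x.1) h))
      have hsumX : ∑ v ∈ X, c v = (∑ v : {v : V // v ≠ v0}, c' v) - omegaW H' c' := by
        rw [hXdef, Finset.sum_image (fun a _ b _ h => Subtype.ext h), ← hsum]
        have h1 : ∑ v ∈ Kᶜ, c' v + ∑ v ∈ K, c' v = ∑ v : {v : V // v ≠ v0}, c' v :=
          Finset.sum_compl_add_sum K c'
        simp only [hc'] at h1 ⊢
        omega
      calc OPT H c ≤ ∑ v ∈ X, c v := opt_le H c X hhit
        _ = _ := hsumX
  · obtain ⟨X, hX, hsum⟩ := opt_mem H c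
    rw [← hsum]
    by_cases hv0 : v0 ∈ X
    · -- v0 ∈ X : use left branch
      set X' : Finset {v : V // v ≠ v0} := X.subtype (· ≠ v0) with hX'def
      have hnotin : ∀ u : {w : {v : V // v ≠ v0} // w ∈ (↑X' : Set {v : V // v ≠ v0})ᶜ},
          u.1.1 ∈ (↑X : Set V)ᶜ := by
        intro u h
        exact u.2 (Finset.mem_coe.2 (Finset.mem_subtype.2 (Finset.mem_coe.1 h)))
      have hhit : IsHittingSet H' ↑X' := by
        intro u v hne hreach
        let g : H'.induce (↑X' : Set {v : V // v ≠ v0})ᶜ →g H.induce (↑X : Set V)ᶜ :=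
          ⟨fun u => ⟨u.1.1, hnotin u⟩, fun {a b} h => h⟩
        have hgne : g u ≠ g v := by
          intro h
          exact hne (Subtype.ext (Subtype.ext
            (congrArg (fun x : {w : V // w ∈ (↑X : Set V)ᶜ} => x.1) h)))
        exact hX (g u) (g v) hgne (hreach.map g)
      have hsplit : ∑ v ∈ X, c v = c v0 + ∑ v ∈ X', c' v := by
        rw [Finset.sum_subtype_eq_sum_filter]
        rw [← Finset.add_sum_erase _ _ hv0]
        congr 1
        apply Finset.sum_congr _ (fun _ _ => rfl)
        ext a
        simp [Finset.mem_erase, Finset.mem_filter, and_comm]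
      refine (min_le_left _ _).trans ?_
      rw [hsplit]
      exact Nat.add_le_add_left (opt_le H' c' X' hhit) _
    · -- v0 ∉ X : use right branch
      set K : Finset {v : V // v ≠ v0} := Finset.univ.filter (fun u => u.1 ∉ X) with hKdef
      have hclique : H'.IsClique (↑K : Set {v : V // v ≠ v0}) := by
        intro u hu v hv hne
        by_contra hadj
        have huX : u.1 ∉ X := (Finset.mem_filter.1 (Finset.mem_coe.1 hu)).2
        have hvX : v.1 ∉ X := (Finset.mem_filter.1 (Finset.mem_coe.1 hv)).2
        let a : {w : V // w ∈ (↑X : Set V)ᶜ} := ⟨u.1, huX⟩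
        let b : {w : V // w ∈ (↑X : Set V)ᶜ} := ⟨v.1, hvX⟩
        let z : {w : V // w ∈ (↑X : Set V)ᶜ} := ⟨v0, hv0⟩
        have h1 : (H.induce (↑X : Set V)ᶜ).Adj a z := (huniv u.1 u.2).symm
        have h2 : (H.induce (↑X : Set V)ᶜ).Adj z b := huniv v.1 v.2
        have habne : a ≠ b := fun h =>
          hne (Subtype.ext (congrArg (fun x : {w : V // w ∈ (↑X : Set V)ᶜ} => x.1) h))
        have := hX a b habne (h1.reachable.trans h2.reachable)
        exact hadj this
      have hXeq : X = Kᶜ.image Subtype.val := by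
        ext a
        simp only [Finset.mem_image, Finset.mem_compl, hKdef, Finset.mem_filter,
          Finset.mem_univ, true_and, not_not]
        constructor
        · intro ha
          exact ⟨⟨a, fun h => hv0 (h ▸ ha)⟩, ha, rfl⟩
        · rintro ⟨x, hx, rfl⟩
          exact hx
      have hsumX : ∑ v ∈ X, c v = ∑ v : {v : V // v ≠ v0}, c' v - ∑ v ∈ K, c' v := by
        rw [hXeq, Finset.sum_image (fun a _ b _ h => Subtype.ext h)]
        have h1 : ∑ v ∈ Kᶜ, c' v + ∑ v ∈ K, c' v = ∑ v : {v : V // v ≠ v0}, c' v :=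
          Finset.sum_compl_add_sum K c'
        simp only [hc'] at h1 ⊢
        omega
      refine (min_le_right _ _).trans ?_
      rw [hsumX]
      exact Nat.sub_le_sub_left (sum_le_omega H' c' K hclique) _
end

section
/- Let H be a graph with a universal vertex v_0, H' = H − v_0, and let c': V(H') → ℤ≥1 be a cost function satisfying (i) c'(V(H')) ≥ 2ω(H',c') and (ii) OPT(H',c') ≥ ω(H',c') − 1. Then there exists an integer c_0 ≥ 1 such that, extending c' to c on V(H) by c(v_0) = c_0, one has c(V(H)) ≤ 2·OPT(H,c) + 1. -/
variable {V : Type*}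

private lemma sum_dite_eq_sum_subtype [Fintype V] [DecidableEq V] (v0 : V)
    (c' : {v : V // v ≠ v0} → ℕ) (c0 : ℕ) (Y : Finset V) (hY : v0 ∉ Y) :
    ∑ v ∈ Y, (if h : v = v0 then c0 else c' ⟨v, h⟩)
      = ∑ v ∈ Finset.univ.filter (fun v : {v : V // v ≠ v0} => ↑v ∈ Y), c' v := by
  refine Finset.sum_bij' (fun v hv => (⟨v, fun h => hY (h ▸ hv)⟩ : {v : V // v ≠ v0}))
    (fun v _ => ↑v) ?_ ?_ ?_ ?_ ?_
  · intro a ha; simp [ha]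
  · intro a ha; simp at ha; exact ha
  · intro a ha; rfl
  · intro a ha; rfl
  · intro a ha; rw [dif_neg]

/-- Extension lemma: given a cost function c' on H' = H − v₀ with values ≥ 1 satisfying
(i) c'(V(H')) ≥ 2ω(H',c') and (ii) OPT(H',c') ≥ ω(H',c') − 1, there is c₀ ≥ 1 such that
the extension c of c' with c(v₀) = c₀ satisfies c(V(H)) ≤ 2·OPT(H,c) + 1. -/
theorem stmt_6 [Fintype V] [DecidableEq V] (H : SimpleGraph V) (v0 : V)
    (huniv : ∀ v, v ≠ v0 → H.Adj v0 v)
    (c' : {v : V // v ≠ v0} → ℕ) (hpos : ∀ v, 1 ≤ c' v)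
    (hi : 2 * omegaW (H.comap (Subtype.val : {v : V // v ≠ v0} → V)) c' ≤ ∑ v, c' v)
    (hii : omegaW (H.comap (Subtype.val : {v : V // v ≠ v0} → V)) c' - 1 ≤
      OPT (H.comap (Subtype.val : {v : V // v ≠ v0} → V)) c') :
    ∃ c0 : ℕ, 1 ≤ c0 ∧
      (∑ v : V, if h : v = v0 then c0 else c' ⟨v, h⟩) ≤
        2 * OPT H (fun v => if h : v = v0 then c0 else c' ⟨v, h⟩) + 1 := by
  classical
  set H' := H.comap (Subtype.val : {v : V // v ≠ v0} → V) with hH'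
  set S : ℕ := ∑ v, c' v with hS
  set om : ℕ := omegaW H' c' with hom
  set opt' : ℕ := OPT H' c' with hopt'
  set c0 : ℕ := max 1 (S - 2 * opt' - 1) with hc0def
  have hc01 : 1 ≤ c0 := le_max_left _ _
  have hc0lo : S - 2 * opt' - 1 ≤ c0 := le_max_right _ _
  have homle : om ≤ opt' + 1 := by omega
  have hc0hi : c0 + 2 * om ≤ S + 1 := by
    have h1 : (1 : ℕ) ≤ S + 1 - 2 * om := by omega
    have h2 : S - 2 * opt' - 1 ≤ S + 1 - 2 * om := by omega
    have := max_le h1 h2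
    omega
  refine ⟨c0, hc01, ?_⟩
  set c : V → ℕ := fun v => if h : v = v0 then c0 else c' ⟨v, h⟩ with hc
  -- total sum of c equals c0 + S
  have htot : (∑ v : V, c v) = c0 + S := by
    rw [← Finset.add_sum_erase _ c (Finset.mem_univ v0)]
    have h1 : c v0 = c0 := by simp [hc]
    have h2 : ∑ v ∈ Finset.univ.erase v0, c v = S := by
      rw [hc, sum_dite_eq_sum_subtype v0 c' c0 _ (Finset.notMem_erase v0 _)]
      rw [hS]
      apply Finset.sum_congr _ (fun _ _ => rfl)
      ext v
      simp [v.2]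
    rw [h1, h2]
  -- OPT of H is attained
  have hne : {n | ∃ X : Finset V, IsHittingSet H ↑X ∧ ∑ v ∈ X, c v = n}.Nonempty := by
    refine ⟨∑ v ∈ Finset.univ, c v, Finset.univ, ?_, rfl⟩
    intro u v _ _
    exact absurd u.2 (by simp)
  have hmem := Nat.sInf_mem hne
  obtain ⟨X, hXhs, hXsum⟩ := hmem
  set optH : ℕ := OPT H c with hoptH
  have hX2 : ∑ v ∈ X, c v = optH := hXsum
  rw [htot]
  by_cases hv0X : v0 ∈ X
  · -- v0 in the hitting set: X minus v0 is a hitting set of H'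
    set X' : Finset {v : V // v ≠ v0} := Finset.univ.filter (fun v : {v : V // v ≠ v0} => ↑v ∈ X) with hX'def
    have hX'hs : IsHittingSet H' ↑X' := by
      intro u v huv hre
      have pf : ∀ a : {x : {v : V // v ≠ v0} // x ∈ (↑X' : Set {v : V // v ≠ v0})ᶜ}, (a.1.1 : V) ∈ (↑X : Set V)ᶜ := by
        intro a
        have := a.2
        simp [hX'def] at this
        simpa using this
      let φ : (H'.induce (↑X' : Set {v : V // v ≠ v0})ᶜ) →g (H.induce (↑X : Set V)ᶜ) :=
        { toFun := fun a => ⟨a.1.1, pf a⟩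
          map_rel' := fun h => h }
      have hne' : (⟨u.1.1, pf u⟩ : {x : V // x ∈ (↑X : Set V)ᶜ}) ≠ ⟨v.1.1, pf v⟩ := by
        intro h
        apply huv
        apply Subtype.ext; apply Subtype.ext
        simpa using h
      have := hXhs _ _ hne' (hre.map φ)
      exact this
    have hopt'le : opt' ≤ ∑ v ∈ X', c' v := Nat.sInf_le ⟨X', hX'hs, rfl⟩
    have hsplit : ∑ v ∈ X, c v = c0 + ∑ v ∈ X', c' v := by
      rw [← Finset.add_sum_erase _ c hv0X]
      have h1 : c v0 = c0 := by simp [hc]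
      have h2 : ∑ v ∈ X.erase v0, c v = ∑ v ∈ X', c' v := by
        rw [hc, sum_dite_eq_sum_subtype v0 c' c0 _ (Finset.notMem_erase v0 _)]
        apply Finset.sum_congr _ (fun _ _ => rfl)
        ext v
        simp [hX'def, v.2]
      rw [h1, h2]
    have : c0 + opt' ≤ optH := by
      rw [← hX2, hsplit]; omega
    omega
  · -- v0 not in the hitting set: the complement of X in {v : V // v ≠ v0} is a clique
    set K : Finset {v : V // v ≠ v0} := Finset.univ.filter (fun v : {v : V // v ≠ v0} => ↑v ∉ X) with hKdef
    have hKcl : H'.IsClique (↑K : Set {v : V // v ≠ v0}) := by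
      intro u hu v hv huv
      simp [hKdef] at hu hv
      have hz : v0 ∈ (↑X : Set V)ᶜ := by simpa using hv0X
      have ha : (u.1 : V) ∈ (↑X : Set V)ᶜ := by simpa using hu
      have hb : (v.1 : V) ∈ (↑X : Set V)ᶜ := by simpa using hv
      have e1 : (H.induce (↑X : Set V)ᶜ).Adj ⟨u.1, ha⟩ ⟨v0, hz⟩ := (huniv u.1 u.2).symm
      have e2 : (H.induce (↑X : Set V)ᶜ).Adj ⟨v0, hz⟩ ⟨v.1, hb⟩ := huniv v.1 v.2
      have hre : (H.induce (↑X : Set V)ᶜ).Reachable ⟨u.1, ha⟩ ⟨v.1, hb⟩ :=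
        e1.reachable.trans e2.reachable
      have hne2 : (⟨u.1, ha⟩ : {x : V // x ∈ (↑X : Set V)ᶜ}) ≠ ⟨v.1, hb⟩ := by
        intro h
        apply huv; apply Subtype.ext
        simpa using h
      exact hXhs _ _ hne2 hre
    have hbdd : BddAbove {n | ∃ K : Finset {v : V // v ≠ v0}, H'.IsClique (↑K : Set {v : V // v ≠ v0}) ∧ ∑ v ∈ K, c' v = n} := by
      refine ⟨S, fun n hn => ?_⟩
      obtain ⟨K0, _, hK0⟩ := hn
      rw [← hK0, hS]
      exact Finset.sum_le_sum_of_subset (Finset.subset_univ K0)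
    have hKle : ∑ v ∈ K, c' v ≤ om := le_csSup hbdd ⟨K, hKcl, rfl⟩
    have hXeq : ∑ v ∈ X, c v = S - ∑ v ∈ K, c' v := by
      have h2 : ∑ v ∈ X, c v = ∑ v ∈ Finset.univ.filter (fun v : {v : V // v ≠ v0} => ↑v ∈ X), c' v := by
        rw [hc]; exact sum_dite_eq_sum_subtype v0 c' c0 X hv0X
      have h3 : (∑ v ∈ Finset.univ.filter (fun v : {v : V // v ≠ v0} => ↑v ∈ X), c' v) + ∑ v ∈ K, c' v = S := by
        rw [hKdef, hS]
        exact Finset.sum_filter_add_sum_filter_not _ _ _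
      omega
    have hopt2 : S - ∑ v ∈ K, c' v ≤ optH := by rw [← hX2, hXeq]
    have hSom : S - om ≤ optH := by omega
    omega
end

section
/- Let G be a graph, K_0 a clique of G that is also a hitting set, and suppose there is a family of stable sets {S_v : v ∈ K_0} such that (P1) every vertex of G lies in some S_v, (P2) each S_v contains v and at least one other vertex, and (P3) for every two distinct v, v' ∈ K_0, the subgraph induced by S_v ∪ S_{v'} contains an induced P_3. Let c = Σ_{v ∈ K_0} χ^{S_v} (so c(u) counts the stable sets containing u). Then c(u) ≥ 1 for all u, c(V(G)) ≥ 2ω(G,c), and OPT(G,c) ≥ ω(G,c) − 1 = |K_0| − 1. -/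
variable {V : Type*}

/-- Given a hitting clique K₀ and a family of stable sets S_v (v ∈ K₀) satisfying (P1)–(P3),
the cost function c = Σ_{v ∈ K₀} χ^{S_v} satisfies c ≥ 1 everywhere, c(V) ≥ 2ω(G,c),
ω(G,c) = |K₀|, and OPT(G,c) ≥ |K₀| − 1. -/
theorem stmt_7 [Fintype V] [DecidableEq V] (G : SimpleGraph V) (K0 : Finset V)
    (hclique : G.IsClique (↑K0 : Set V)) (hhit : IsHittingSet G ↑K0)
    (S : V → Finset V)
    (hstable : ∀ v ∈ K0, (Gᶜ).IsClique (↑(S v) : Set V))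
    (hP1 : ∀ u : V, ∃ v ∈ K0, u ∈ S v)
    (hP2 : ∀ v ∈ K0, v ∈ S v ∧ 2 ≤ (S v).card)
    (hP3 : ∀ v ∈ K0, ∀ v' ∈ K0, v ≠ v' →
      ∃ a b w : V, a ∈ S v ∪ S v' ∧ b ∈ S v ∪ S v' ∧ w ∈ S v ∪ S v' ∧ IsInducedP3 G a b w)
    (c : V → ℕ) (hc : ∀ u, c u = (K0.filter (fun v => u ∈ S v)).card) :
    (∀ u, 1 ≤ c u) ∧ 2 * omegaW G c ≤ ∑ u, c u ∧
      omegaW G c = K0.card ∧ K0.card - 1 ≤ OPT G c := by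
  classical
  -- c v = 1 for v in K0
  have hcK : ∀ v ∈ K0, c v = 1 := by
    intro v hv
    rw [hc]
    have h1 : K0.filter (fun v' => v ∈ S v') = {v} := by
      apply Finset.eq_singleton_iff_unique_mem.mpr
      refine ⟨Finset.mem_filter.mpr ⟨hv, (hP2 v hv).1⟩, ?_⟩
      intro v' hv'
      rw [Finset.mem_filter] at hv'
      by_contra hne
      have hadj : G.Adj v' v := hclique hv'.1 hv hne
      have hst := hstable v' hv'.1
        (by exact_mod_cast (hP2 v' hv'.1).1) (by exact_mod_cast hv'.2) hne
      rw [SimpleGraph.compl_adj] at hst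
      exact hst.2 hadj
    rw [h1, Finset.card_singleton]
  have hK0sum : ∑ v ∈ K0, c v = K0.card := by
    rw [Finset.sum_congr rfl hcK, Finset.sum_const, smul_eq_mul, mul_one]
  -- double counting
  have hsum : ∀ X : Finset V, ∑ u ∈ X, c u = ∑ v ∈ K0, (X ∩ S v).card := by
    intro X
    have : ∀ u ∈ X, c u = ∑ v ∈ K0, if u ∈ S v then 1 else 0 := by
      intro u _
      rw [hc, Finset.card_filter]
    rw [Finset.sum_congr rfl this, Finset.sum_comm]
    apply Finset.sum_congr rfl
    intro v _
    rw [← Finset.card_filter, Finset.filter_mem_eq_inter]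
  -- clique bound
  have hKbound : ∀ K : Finset V, G.IsClique (↑K : Set V) → ∑ v ∈ K, c v ≤ K0.card := by
    intro K hK
    rw [hsum K]
    calc ∑ v ∈ K0, (K ∩ S v).card ≤ ∑ v ∈ K0, 1 := by
          apply Finset.sum_le_sum
          intro v hv
          rw [Finset.card_le_one]
          intro a ha b hb
          rw [Finset.mem_inter] at ha hb
          by_contra hne
          have hadj : G.Adj a b := hK (by exact_mod_cast ha.1) (by exact_mod_cast hb.1) hne
          have hst := hstable v hv
            (by exact_mod_cast ha.2) (by exact_mod_cast hb.2) hne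
          rw [SimpleGraph.compl_adj] at hst
          exact hst.2 hadj
      _ = K0.card := by rw [Finset.sum_const, smul_eq_mul, mul_one]
  have hbdd : BddAbove {n | ∃ K : Finset V, G.IsClique (↑K : Set V) ∧ ∑ v ∈ K, c v = n} := by
    refine ⟨K0.card, ?_⟩
    rintro n ⟨K, hK, rfl⟩
    exact hKbound K hK
  have hmemK0 : K0.card ∈ {n | ∃ K : Finset V, G.IsClique (↑K : Set V) ∧ ∑ v ∈ K, c v = n} :=
    ⟨K0, hclique, hK0sum⟩
  have homega : omegaW G c = K0.card := by
    unfold omegaW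
    apply le_antisymm
    · apply csSup_le ⟨K0.card, hmemK0⟩
      rintro n ⟨K, hK, rfl⟩
      exact hKbound K hK
    · exact le_csSup hbdd hmemK0
  refine ⟨?_, ?_, homega, ?_⟩
  · intro u
    rw [hc]
    obtain ⟨v, hv, hu⟩ := hP1 u
    exact Finset.card_pos.mpr ⟨v, Finset.mem_filter.mpr ⟨hv, hu⟩⟩
  · rw [homega, hsum Finset.univ]
    calc 2 * K0.card = ∑ _v ∈ K0, 2 := by rw [Finset.sum_const, smul_eq_mul, mul_comm]
      _ ≤ ∑ v ∈ K0, (Finset.univ ∩ S v).card := by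
          apply Finset.sum_le_sum
          intro v hv
          rw [Finset.univ_inter]
          exact (hP2 v hv).2
  · -- OPT bound
    have hhitsum : ∀ X : Finset V, IsHittingSet G ↑X → K0.card - 1 ≤ ∑ u ∈ X, c u := by
      intro X hX
      rw [hsum X]
      have key : (K0.filter fun v => X ∩ S v = ∅).card ≤ 1 := by
        rw [Finset.card_le_one]
        intro v hv v' hv'
        rw [Finset.mem_filter] at hv hv'
        by_contra hne
        obtain ⟨a, b, w, ha, hb, hw, hnaw, hab, hbw, hadjnaw⟩ := hP3 v hv.1 v' hv'.1 hne
        have hnX : ∀ x, x ∈ S v ∪ S v' → x ∉ X := by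
          intro x hx hxX
          rcases Finset.mem_union.mp hx with h | h
          · exact Finset.notMem_empty x (hv.2 ▸ Finset.mem_inter.mpr ⟨hxX, h⟩)
          · exact Finset.notMem_empty x (hv'.2 ▸ Finset.mem_inter.mpr ⟨hxX, h⟩)
        have haX : a ∈ (↑X : Set V)ᶜ := hnX a ha
        have hbX : b ∈ (↑X : Set V)ᶜ := hnX b hb
        have hwX : w ∈ (↑X : Set V)ᶜ := hnX w hw
        have h1 : (G.induce (↑X : Set V)ᶜ).Adj ⟨a, haX⟩ ⟨b, hbX⟩ := hab
        have h2 : (G.induce (↑X : Set V)ᶜ).Adj ⟨b, hbX⟩ ⟨w, hwX⟩ := hbw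
        have hreach : (G.induce (↑X : Set V)ᶜ).Reachable ⟨a, haX⟩ ⟨w, hwX⟩ :=
          h1.reachable.trans h2.reachable
        have hneq : (⟨a, haX⟩ : ((↑X : Set V)ᶜ : Set V)) ≠ ⟨w, hwX⟩ := by
          simp only [ne_eq, Subtype.mk.injEq]
          exact hnaw
        exact hadjnaw (hX _ _ hneq hreach)
      have hpart := Finset.card_filter_add_card_filter_not
        (s := K0) (p := fun v => X ∩ S v = ∅)
      have hF : K0.card - 1 ≤ (K0.filter fun v => ¬ X ∩ S v = ∅).card := by omega
      calc K0.card - 1 ≤ (K0.filter fun v => ¬ X ∩ S v = ∅).card := hF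
        _ = ∑ v ∈ K0.filter fun v => ¬ X ∩ S v = ∅, 1 := by
            rw [Finset.sum_const, smul_eq_mul, mul_one]
        _ ≤ ∑ v ∈ K0.filter fun v => ¬ X ∩ S v = ∅, (X ∩ S v).card := by
            apply Finset.sum_le_sum
            intro v hv
            rw [Finset.mem_filter] at hv
            exact Finset.card_pos.mpr (Finset.nonempty_iff_ne_empty.mpr hv.2)
        _ ≤ ∑ v ∈ K0, (X ∩ S v).card :=
            Finset.sum_le_sum_of_subset (Finset.filter_subset _ _)
    have hne : {n | ∃ X : Finset V, IsHittingSet G ↑X ∧ ∑ v ∈ X, c v = n}.Nonempty :=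
      ⟨K0.card, K0, hhit, hK0sum⟩
    obtain ⟨X, hX, hXs⟩ := Nat.sInf_mem hne
    unfold OPT
    rw [← hXs] at *
    exact hhitsum X hX
end

section
/- Let H be a graph, v_0 ∈ V(H), and v a vertex at distance exactly 2 from v_0, such that every pair of true twins in H[N[v_0]] has a distinguisher in H. Define u ≡ u' for u, u' ∈ N[v_0] if u = u' or u, u' are true twins in H − v. Then every equivalence class of ≡ has size at most 2. -/
variable {V : Type*}

/-- If v is at distance exactly 2 from v₀ and every pair of true twins in H[N[v₀]] has a
distinguisher, then the relation "equal or true twins in H − v" on N[v₀] has all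
equivalence classes of size at most 2 (no three distinct pairwise related vertices). -/
theorem stmt_9 (H : SimpleGraph V) (v0 v : V)
    (hv : v ≠ v0 ∧ ¬ H.Adj v0 v ∧ ∃ z, H.Adj v0 z ∧ H.Adj z v)
    (hdisting : ∀ u u' : V,
      TrueTwinsIn H (insert v0 (H.neighborSet v0)) u u' →
      ∃ z : V, z ≠ u ∧ z ≠ u' ∧
        ((H.Adj z u ∧ ¬ H.Adj z u') ∨ (¬ H.Adj z u ∧ H.Adj z u'))) :
    ∀ u u' u'' : V,
      u ∈ insert v0 (H.neighborSet v0) → u' ∈ insert v0 (H.neighborSet v0) →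
      u'' ∈ insert v0 (H.neighborSet v0) →
      u ≠ u' → u' ≠ u'' → u ≠ u'' →
      ¬ (TrueTwinsIn H ({v}ᶜ : Set V) u u' ∧ TrueTwinsIn H ({v}ᶜ : Set V) u' u'' ∧
          TrueTwinsIn H ({v}ᶜ : Set V) u u'') := by
  rintro u u' u'' hu hu' hu'' hne1 hne2 hne3
    ⟨⟨huA, hu'A, hadj1, htw1⟩, ⟨_, hu''A, hadj2, htw2⟩, ⟨_, _, hadj3, htw3⟩⟩
  have hvN : v ∉ insert v0 (H.neighborSet v0) := by
    intro h
    rcases h with h | h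
    · exact hv.1 h
    · exact hv.2.1 h
  have key : ∀ a b : V, a ∈ ({v}ᶜ : Set V) → b ∈ ({v}ᶜ : Set V) → H.Adj a b →
      (∀ w ∈ ({v}ᶜ : Set V), w ≠ a → w ≠ b → (H.Adj a w ↔ H.Adj b w)) →
      a ∈ insert v0 (H.neighborSet v0) → b ∈ insert v0 (H.neighborSet v0) →
      ¬ (H.Adj v a ↔ H.Adj v b) := by
    intro a b hav hbv hab htw haA hbA hiff
    obtain ⟨z, hza, hzb, hz⟩ := hdisting a b
      ⟨haA, hbA, hab, fun w hw hwa hwb => htw w (fun h => hvN (h ▸ hw)) hwa hwb⟩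
    by_cases hzv : z = v
    · subst hzv
      rcases hz with ⟨h1, h2⟩ | ⟨h1, h2⟩
      · exact h2 (hiff.mp h1)
      · exact h1 (hiff.mpr h2)
    · have := htw z hzv hza hzb
      rcases hz with ⟨h1, h2⟩ | ⟨h1, h2⟩
      · exact h2 ((this.mp h1.symm).symm)
      · exact h1 ((this.mpr h2.symm).symm)
  have k1 := key u u' huA hu'A hadj1 htw1 hu hu'
  have k2 := key u' u'' hu'A hu''A hadj2 htw2 hu' hu''
  have k3 := key u u'' huA hu''A hadj3 htw3 hu hu''
  tauto
end

section
/- Let G be a cycle on n ≥ 4 vertices with nonnegative rational vertex costs c, and suppose x is a vector assigning x_v = 1/3 to every vertex (which satisfies x_u + x_v + x_w ≥ 1 for every induced P_3). Then there exists a hitting set X of G with c(X) ≤ (3/2) · Σ_v c(v) x_v = (1/2) · c(V(G)). -/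
variable {V : Type*}

open Finset

/-- Max-cut: in a graph with min degree ≥ 1, there is a 2-coloring where every
vertex has a neighbor of the other color. -/
lemma exists_good_coloring [Fintype V] [DecidableEq V] (G : SimpleGraph V)
    [DecidableRel G.Adj] (hdeg : ∀ v : V, 0 < G.degree v) :
    ∃ χ : V → Bool, ∀ v : V, ∃ u : V, G.Adj v u ∧ χ u ≠ χ v := by
  classical
  obtain ⟨χ, -, hmax⟩ := Finset.exists_max_image (univ : Finset (V → Bool))
    (fun χ => (univ.filter (fun p : V × V => G.Adj p.1 p.2 ∧ χ p.1 ≠ χ p.2)).card)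
    ⟨fun _ => true, mem_univ _⟩
  refine ⟨χ, fun v => ?_⟩
  by_contra hcon
  push_neg at hcon
  set χ' : V → Bool := Function.update χ v (!χ v) with hχ'
  obtain ⟨u, hu⟩ : ∃ u, u ∈ G.neighborFinset v := (card_pos.mp (by
    rw [SimpleGraph.card_neighborFinset_eq_degree]; exact hdeg v))
  rw [SimpleGraph.mem_neighborFinset] at hu
  have huv : u ≠ v := fun h => (G.ne_of_adj hu).symm (by rw [h])
  have hss : (univ.filter (fun p : V × V => G.Adj p.1 p.2 ∧ χ p.1 ≠ χ p.2)) ⊂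
      (univ.filter (fun p : V × V => G.Adj p.1 p.2 ∧ χ' p.1 ≠ χ' p.2)) := by
    constructor
    · intro p hp
      simp only [mem_filter, mem_univ, true_and] at hp ⊢
      obtain ⟨hadj, hne⟩ := hp
      have h1 : p.1 ≠ v := by rintro rfl; exact hne (hcon p.2 hadj).symm
      have h2 : p.2 ≠ v := by rintro rfl; exact hne (hcon p.1 hadj.symm)
      rw [hχ', Function.update_of_ne h1, Function.update_of_ne h2]
      exact ⟨hadj, hne⟩
    · intro hsub
      have hmem : (v, u) ∈ univ.filter (fun p : V × V => G.Adj p.1 p.2 ∧ χ' p.1 ≠ χ' p.2) := by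
        simp only [mem_filter, mem_univ, true_and]
        refine ⟨hu, ?_⟩
        rw [hχ', Function.update_self, Function.update_of_ne huv, hcon u hu]
        exact (Bool.not_ne_self _)
      have := hsub hmem
      simp only [mem_filter, mem_univ, true_and] at this
      exact this.2 (hcon u hu).symm
  exact absurd (hmax χ' (mem_univ _)) (not_le.mpr (card_lt_card hss))

/-- In a graph where neighbors are unique, a walk between distinct vertices
yields adjacency. -/
lemma walk_adj {W : Type*} (H : SimpleGraph W)
    (huniq : ∀ a c c' : W, H.Adj a c → H.Adj a c' → c = c') :
    ∀ {u v : W}, H.Walk u v → u ≠ v → H.Adj u v := by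
  intro u v w
  induction w with
  | nil => exact fun h => absurd rfl h
  | @cons a b d hab p ih =>
    intro hne
    rcases eq_or_ne b d with h | h
    · subst h; exact hab
    · exact absurd (huniq b a d hab.symm (ih h)) hne

/-- The color class of `b` under a good coloring is a hitting set of a 2-regular graph. -/
lemma color_class_hitting [Fintype V] [DecidableEq V] (G : SimpleGraph V)
    [DecidableRel G.Adj] (hreg : ∀ v : V, G.degree v = 2) (χ : V → Bool)
    (hχ : ∀ v : V, ∃ u : V, G.Adj v u ∧ χ u ≠ χ v) (b : Bool) :
    IsHittingSet G ↑(univ.filter (fun v => χ v = b)) := by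
  classical
  set S : Set V := (↑(univ.filter (fun v => χ v = b)) : Set V)ᶜ with hS
  have hmemS : ∀ x : V, x ∈ S ↔ χ x ≠ b := by
    intro x; simp [hS]
  have hsame : ∀ x y : V, χ x ≠ b → χ y ≠ b → χ x = χ y := by
    intro x y hx hy
    cases hbx : χ x <;> cases hby : χ y <;> cases b <;> simp_all
  have huniq : ∀ a c c' : S, (G.induce S).Adj a c → (G.induce S).Adj a c' → c = c' := by
    intro a c c' hac hac'
    have h1 : G.Adj a.val c.val := hac
    have h2 : G.Adj a.val c'.val := hac'
    by_contra hne
    have hnev : c.val ≠ c'.val := fun h => hne (Subtype.ext h)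
    obtain ⟨u₀, hadj₀, hcol₀⟩ := hχ a.val
    have hca : χ c.val = χ a.val := hsame _ _ ((hmemS _).mp c.2) ((hmemS _).mp a.2)
    have hc'a : χ c'.val = χ a.val := hsame _ _ ((hmemS _).mp c'.2) ((hmemS _).mp a.2)
    have hu₀c : u₀ ≠ c.val := fun h => hcol₀ (h ▸ hca)
    have hu₀c' : u₀ ≠ c'.val := fun h => hcol₀ (h ▸ hc'a)
    have hsub : ({c.val, c'.val, u₀} : Finset V) ⊆ G.neighborFinset a.val := by
      intro x hx
      simp only [mem_insert, mem_singleton] at hx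
      rw [SimpleGraph.mem_neighborFinset]
      rcases hx with rfl | rfl | rfl
      · exact h1
      · exact h2
      · exact hadj₀
    have hcard : ({c.val, c'.val, u₀} : Finset V).card = 3 := by
      rw [card_insert_of_notMem (by simp [hnev, hu₀c.symm]),
        card_insert_of_notMem (by simp [hu₀c'.symm]), card_singleton]
    have := card_le_card hsub
    rw [hcard, SimpleGraph.card_neighborFinset_eq_degree, hreg] at this
    omega
  intro x y hne hr
  obtain ⟨w⟩ := hr
  exact walk_adj _ huniq w hne

/-- On a cycle (connected 2-regular graph) on n ≥ 4 vertices, the all-1/3 fractional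
solution can be rounded: some hitting set X has c(X) ≤ (3/2)·Σ_v c(v)·(1/3). -/
theorem stmt_12 [Fintype V] [DecidableEq V] (G : SimpleGraph V) [DecidableRel G.Adj]
    (n : ℕ) (hn : 4 ≤ n) (hcard : Fintype.card V = n)
    (hconn : G.Connected) (hreg : ∀ v : V, G.degree v = 2)
    (c : V → ℚ) (hc : ∀ v, 0 ≤ c v) :
    ∃ X : Finset V, IsHittingSet G ↑X ∧
      ∑ v ∈ X, c v ≤ (3 / 2) * ∑ v : V, c v * (1 / 3) := by
  classical
  obtain ⟨χ, hχ⟩ := exists_good_coloring G (fun v => by rw [hreg]; norm_num)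
  set A := univ.filter (fun v => χ v = true) with hA
  set B := univ.filter (fun v => χ v = false) with hB
  have hsplit : ∑ v ∈ A, c v + ∑ v ∈ B, c v = ∑ v : V, c v := by
    rw [hA, hB, ← Finset.sum_filter_add_sum_filter_not univ (fun v => χ v = true) c]
    congr 1
    apply Finset.sum_congr _ (fun _ _ => rfl)
    apply Finset.filter_congr
    intro x _
    simp
  have hRHS : (3 / 2 : ℚ) * ∑ v : V, c v * (1 / 3) = (∑ v : V, c v) / 2 := by
    rw [← Finset.sum_mul]; ring
  rcases le_total (∑ v ∈ A, c v) (∑ v ∈ B, c v) with h | h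
  · exact ⟨A, color_class_hitting G hreg χ hχ true, by rw [hRHS]; linarith⟩
  · exact ⟨B, color_class_hitting G hreg χ hχ false, by rw [hRHS]; linarith⟩
end

section
/- Let G be a graph with girth at least 5 and n vertices. Define x_v = 2/5 for all vertices v, x_{vw} = 0 if vw ∈ E(G), and x_{vw} = 1/5 if vw ∉ E(G). Then for every induced P_3 with vertex set {u,v,w} (middle vertex v) and every vertex z ∉ {u,v,w}: (1) x_u + x_v + x_w ≥ 1 + x_{uv} + x_{vw}; (2) x_{uz} + x_{vz} + x_{wz} ≥ x_z; (3) x_u + x_v + x_w + x_z ≥ 1 + x_{uz} + x_{vz} + x_{wz}; and (4) 1 ≥ x_v ≥ x_{vu} ≥ 0 for all distinct u,v. -/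
section Aux
open SimpleGraph
variable {V : Type*}

lemma five_le_cycle_len {G : SimpleGraph V} (h5 : (5 : ℕ∞) ≤ G.girth)
    {a : V} (w : G.Walk a a) (hw : w.IsCycle) : 5 ≤ w.length := by
  have hna : ¬ G.IsAcyclic := fun h => h _ hw
  have he : G.egirth ≠ ⊤ := fun h => hna (egirth_eq_top.mp h)
  have h5' : (5 : ℕ∞) ≤ G.egirth := by
    unfold SimpleGraph.girth at h5
    rwa [ENat.coe_toNat he] at h5
  have := le_egirth.mp h5' a w hw
  exact_mod_cast this

lemma no_triangle_s15 {G : SimpleGraph V} (h5 : (5 : ℕ∞) ≤ G.girth)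
    {a b c : V} (hab : G.Adj a b) (hbc : G.Adj b c) (hca : G.Adj c a) : False := by
  have w : G.Walk a a := .cons hab (.cons hbc (.cons hca .nil))
  have hw : (SimpleGraph.Walk.cons hab (.cons hbc (.cons hca .nil)) : G.Walk a a).IsCycle := by
    simp [Walk.isCycle_def, Walk.isTrail_def, hab.ne, hbc.ne, hca.ne, hab.ne', hbc.ne', hca.ne',
      Sym2.eq_iff]
  have := five_le_cycle_len h5 _ hw
  simp at this

lemma no_square {G : SimpleGraph V} (h5 : (5 : ℕ∞) ≤ G.girth)
    {a b c d : V} (hac : a ≠ c) (hbd : b ≠ d)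
    (hab : G.Adj a b) (hbc : G.Adj b c) (hcd : G.Adj c d) (hda : G.Adj d a) : False := by
  have hw : (SimpleGraph.Walk.cons hab (.cons hbc (.cons hcd (.cons hda .nil))) : G.Walk a a).IsCycle := by
    simp [Walk.isCycle_def, Walk.isTrail_def, hab.ne, hbc.ne, hcd.ne, hda.ne, hac, hbd,
      hab.ne', hbc.ne', hcd.ne', hda.ne', hac.symm, hbd.symm, Sym2.eq_iff]
  have := five_le_cycle_len h5 _ hw
  simp at this

end Aux

variable {V : Type*}

/-- Edge variables of the Sherali–Adams feasible point: x_{vw} = 0 if vw ∈ E, 1/5 otherwise. -/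
def xE (G : SimpleGraph V) [DecidableRel G.Adj] (a b : V) : ℚ :=
  if G.Adj a b then 0 else 1 / 5

/-- Vertex variables: x_v = 2/5 for all v. -/
def xV : V → ℚ := fun _ => 2 / 5

/-- In a graph of girth at least 5, the point (x_v = 2/5, x_{vw} as above) satisfies all
the round-1 Sherali–Adams inequalities for the P₃-covering LP. -/
theorem stmt_15 (G : SimpleGraph V) [DecidableRel G.Adj]
    (hgirth : (5 : ℕ∞) ≤ G.girth) :
    (∀ u v w z : V, IsInducedP3 G u v w → z ≠ u → z ≠ v → z ≠ w →
      (1 + xE G u v + xE G v w ≤ xV u + xV v + xV w) ∧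
      (xV z ≤ xE G u z + xE G v z + xE G w z) ∧
      (1 + xE G u z + xE G v z + xE G w z ≤ xV u + xV v + xV w + xV z)) ∧
    (∀ u v : V, u ≠ v → xE G v u ≤ xV v ∧ (xV v : ℚ) ≤ 1 ∧ 0 ≤ xE G v u) := by
  constructor
  · rintro u v w z ⟨huw, huv, hvw, hnuw⟩ hzu hzv hzw
    refine ⟨?_, ?_, ?_⟩
    · simp [xE, xV, huv, hvw]; norm_num
    · -- at most one of uz, vz, wz is an edge
      have h1 : ¬ (G.Adj u z ∧ G.Adj v z) := fun ⟨h, h'⟩ =>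
        no_triangle_s15 hgirth huv h' h.symm
      have h2 : ¬ (G.Adj v z ∧ G.Adj w z) := fun ⟨h, h'⟩ =>
        no_triangle_s15 hgirth hvw h' h.symm
      have h3 : ¬ (G.Adj u z ∧ G.Adj w z) := fun ⟨h, h'⟩ =>
        no_square hgirth huw (fun e => hzv e.symm) huv hvw h' h.symm
      simp only [xE, xV]
      by_cases ha : G.Adj u z <;> by_cases hb : G.Adj v z <;> by_cases hc : G.Adj w z <;>
        simp_all <;> norm_num
    · simp only [xE, xV]
      by_cases ha : G.Adj u z <;> by_cases hb : G.Adj v z <;> by_cases hc : G.Adj w z <;>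
        simp_all <;> norm_num
  · intro u v _
    refine ⟨?_, ?_, ?_⟩ <;> simp only [xE, xV] <;> (try split_ifs) <;> norm_num
end

section
/- Let G be a graph, K a clique of size k in G, and suppose for each edge of K there is a distinguisher (a vertex adjacent to exactly one endpoint). Then there exists an induced subgraph H of G containing K with |V(H)| ≤ 2k − 1 and a cost function c_H : V(H) → ℤ≥0 with c_H(V(H)) = 2k − 1 such that every hitting set X of H satisfies c_H(X) ≥ k − 1. -/
variable {V : Type*}

open scoped Classical

lemma aux_sep [Fintype V] [DecidableEq V] (G : SimpleGraph V) (K : Finset V)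
    (hK : G.IsClique (↑K : Set V))
    (hdisting : ∀ a ∈ K, ∀ b ∈ K, a ≠ b → ∃ z : V, z ≠ a ∧ z ≠ b ∧
      ((G.Adj z a ∧ ¬ G.Adj z b) ∨ (¬ G.Adj z a ∧ G.Adj z b))) :
    ∀ S : Finset V, S ⊆ K → S.Nonempty →
    ∃ (D : Finset V) (c : V → ℕ),
      (∀ x ∈ D, x ∉ K) ∧ D.card + 1 ≤ S.card ∧
      (∑ z ∈ D, c z) + 1 = S.card ∧ (∀ z, z ∉ D → c z = 0) ∧
      ∀ T ⊆ S, T.card ≤ 1 + ∑ z ∈ D.filter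
        (fun z => ∃ a ∈ T, ∃ b ∈ T,
          ((G.Adj z a ∧ ¬ G.Adj z b) ∨ (¬ G.Adj z a ∧ G.Adj z b))), c z := by
  intro S
  induction S using Finset.strongInduction with
  | _ S ih =>
    intro hSK hSne
    by_cases hS1 : S.card ≤ 1
    · refine ⟨∅, fun _ => 0, by simp, ?_, ?_, by simp, ?_⟩
      · have := hSne.card_pos; simp only [Finset.card_empty]; omega
      · have := hSne.card_pos; simp only [Finset.sum_const_zero]; omega
      · intro T hTS
        have := Finset.card_le_card hTS
        simp; omega
    · push_neg at hS1
      obtain ⟨a, ha, b, hb, hab⟩ := Finset.one_lt_card.mp hS1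
      obtain ⟨z, hza, hzb, hsep⟩ := hdisting a (hSK ha) b (hSK hb) hab
      have hzK : z ∉ K := by
        intro hz
        rcases hsep with ⟨h1, h2⟩ | ⟨h1, h2⟩
        · exact h2 (hK hz (hSK hb) hzb)
        · exact h1 (hK hz (hSK ha) hza)
      set S₁ := S.filter (fun x => G.Adj z x) with hS₁def
      set S₂ := S.filter (fun x => ¬ G.Adj z x) with hS₂def
      have hS₁ne : S₁.Nonempty := by
        rcases hsep with ⟨h1, _⟩ | ⟨_, h2⟩
        · exact ⟨a, Finset.mem_filter.mpr ⟨ha, h1⟩⟩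
        · exact ⟨b, Finset.mem_filter.mpr ⟨hb, h2⟩⟩
      have hS₂ne : S₂.Nonempty := by
        rcases hsep with ⟨_, h2⟩ | ⟨h1, _⟩
        · exact ⟨b, Finset.mem_filter.mpr ⟨hb, h2⟩⟩
        · exact ⟨a, Finset.mem_filter.mpr ⟨ha, h1⟩⟩
      have hcards : S₁.card + S₂.card = S.card := Finset.card_filter_add_card_filter_not _
      have hsub1 : S₁ ⊂ S := Finset.filter_ssubset.mpr (by
        obtain ⟨x, hx⟩ := hS₂ne
        exact ⟨x, (Finset.mem_filter.mp hx).1, (Finset.mem_filter.mp hx).2⟩)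
      have hsub2 : S₂ ⊂ S := Finset.filter_ssubset.mpr (by
        obtain ⟨x, hx⟩ := hS₁ne
        exact ⟨x, (Finset.mem_filter.mp hx).1, not_not_intro (Finset.mem_filter.mp hx).2⟩)
      obtain ⟨D₁, c₁, hD₁K, hD₁card, hD₁sum, hc₁zero, hkey₁⟩ :=
        ih S₁ hsub1 ((Finset.filter_subset _ _).trans hSK) hS₁ne
      obtain ⟨D₂, c₂, hD₂K, hD₂card, hD₂sum, hc₂zero, hkey₂⟩ :=
        ih S₂ hsub2 ((Finset.filter_subset _ _).trans hSK) hS₂ne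
      refine ⟨insert z (D₁ ∪ D₂), fun v => c₁ v + c₂ v + (if v = z then 1 else 0),
        ?_, ?_, ?_, ?_, ?_⟩
      · intro x hx
        rcases Finset.mem_insert.mp hx with rfl | hx
        · exact hzK
        · rcases Finset.mem_union.mp hx with h | h
          · exact hD₁K x h
          · exact hD₂K x h
      · have h1 := Finset.card_insert_le z (D₁ ∪ D₂)
        have h2 := Finset.card_union_le D₁ D₂
        omega
      · have hsub : D₁ ⊆ insert z (D₁ ∪ D₂) := fun x hx =>
          Finset.mem_insert_of_mem (Finset.mem_union_left _ hx)
        have hsub' : D₂ ⊆ insert z (D₁ ∪ D₂) := fun x hx =>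
          Finset.mem_insert_of_mem (Finset.mem_union_right _ hx)
        have e1 : ∑ v ∈ insert z (D₁ ∪ D₂), c₁ v = ∑ v ∈ D₁, c₁ v :=
          (Finset.sum_subset hsub (fun x _ hx => hc₁zero x hx)).symm
        have e2 : ∑ v ∈ insert z (D₁ ∪ D₂), c₂ v = ∑ v ∈ D₂, c₂ v :=
          (Finset.sum_subset hsub' (fun x _ hx => hc₂zero x hx)).symm
        have e3 : ∑ v ∈ insert z (D₁ ∪ D₂), (if v = z then 1 else 0) = 1 := by
          rw [Finset.sum_ite_eq' (insert z (D₁ ∪ D₂)) z (fun _ => 1)]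
          simp
        rw [Finset.sum_add_distrib, Finset.sum_add_distrib, e1, e2, e3]
        omega
      · intro v hv
        have h1 : v ∉ D₁ := fun h => hv (Finset.mem_insert_of_mem (Finset.mem_union_left _ h))
        have h2 : v ∉ D₂ := fun h => hv (Finset.mem_insert_of_mem (Finset.mem_union_right _ h))
        have h3 : v ≠ z := fun h => hv (h ▸ Finset.mem_insert_self _ _)
        simp [hc₁zero v h1, hc₂zero v h2, h3]
      · intro T hTS
        set P : V → Prop := fun w => ∃ a ∈ T, ∃ b ∈ T,
          ((G.Adj w a ∧ ¬ G.Adj w b) ∨ (¬ G.Adj w a ∧ G.Adj w b)) with hPdef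
        set T₁ := T.filter (fun x => G.Adj z x) with hT₁def
        set T₂ := T.filter (fun x => ¬ G.Adj z x) with hT₂def
        have hTcards : T₁.card + T₂.card = T.card :=
          Finset.card_filter_add_card_filter_not _
        set F := (insert z (D₁ ∪ D₂)).filter P with hFdef
        have hF₁ : D₁.filter (fun w => ∃ a ∈ T₁, ∃ b ∈ T₁,
            ((G.Adj w a ∧ ¬ G.Adj w b) ∨ (¬ G.Adj w a ∧ G.Adj w b))) ⊆ F := by
          intro x hx
          obtain ⟨hxD, a', ha', b', hb', hs⟩ := Finset.mem_filter.mp hx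
          exact Finset.mem_filter.mpr ⟨Finset.mem_insert_of_mem (Finset.mem_union_left _ hxD),
            a', (Finset.filter_subset _ _) ha', b', (Finset.filter_subset _ _) hb', hs⟩
        have hF₂ : D₂.filter (fun w => ∃ a ∈ T₂, ∃ b ∈ T₂,
            ((G.Adj w a ∧ ¬ G.Adj w b) ∨ (¬ G.Adj w a ∧ G.Adj w b))) ⊆ F := by
          intro x hx
          obtain ⟨hxD, a', ha', b', hb', hs⟩ := Finset.mem_filter.mp hx
          exact Finset.mem_filter.mpr ⟨Finset.mem_insert_of_mem (Finset.mem_union_right _ hxD),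
            a', (Finset.filter_subset _ _) ha', b', (Finset.filter_subset _ _) hb', hs⟩
        have hT₁S : T₁ ⊆ S₁ := Finset.filter_subset_filter _ hTS
        have hT₂S : T₂ ⊆ S₂ := Finset.filter_subset_filter _ hTS
        have k1 := hkey₁ T₁ hT₁S
        have k2 := hkey₂ T₂ hT₂S
        have m1 : ∑ w ∈ D₁.filter (fun w => ∃ a ∈ T₁, ∃ b ∈ T₁,
            ((G.Adj w a ∧ ¬ G.Adj w b) ∨ (¬ G.Adj w a ∧ G.Adj w b))), c₁ w
            ≤ ∑ w ∈ F, c₁ w := Finset.sum_le_sum_of_subset hF₁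
        have m2 : ∑ w ∈ D₂.filter (fun w => ∃ a ∈ T₂, ∃ b ∈ T₂,
            ((G.Adj w a ∧ ¬ G.Adj w b) ∨ (¬ G.Adj w a ∧ G.Adj w b))), c₂ w
            ≤ ∑ w ∈ F, c₂ w := Finset.sum_le_sum_of_subset hF₂
        have hsplit : ∑ w ∈ F, (c₁ w + c₂ w + (if w = z then 1 else 0)) =
            ∑ w ∈ F, c₁ w + ∑ w ∈ F, c₂ w + ∑ w ∈ F, (if w = z then 1 else 0) := by
          rw [Finset.sum_add_distrib, Finset.sum_add_distrib]
        change T.card ≤ 1 + ∑ w ∈ F, (c₁ w + c₂ w + (if w = z then 1 else 0))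
        by_cases h1 : T₁ = ∅
        · have : T₁.card = 0 := by rw [h1]; simp
          have le2 : ∑ w ∈ F, c₂ w ≤ ∑ w ∈ F, (c₁ w + c₂ w + (if w = z then 1 else 0)) :=
            Finset.sum_le_sum (fun i _ => by omega)
          omega
        · by_cases h2 : T₂ = ∅
          · have : T₂.card = 0 := by rw [h2]; simp
            have le1 : ∑ w ∈ F, c₁ w ≤ ∑ w ∈ F, (c₁ w + c₂ w + (if w = z then 1 else 0)) :=
              Finset.sum_le_sum (fun i _ => by omega)
            omega
          · obtain ⟨a', ha'⟩ := Finset.nonempty_of_ne_empty h1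
            obtain ⟨b', hb'⟩ := Finset.nonempty_of_ne_empty h2
            have hzF : z ∈ F := by
              refine Finset.mem_filter.mpr ⟨Finset.mem_insert_self _ _, a',
                (Finset.filter_subset _ _) ha', b', (Finset.filter_subset _ _) hb', ?_⟩
              exact Or.inl ⟨(Finset.mem_filter.mp ha').2, (Finset.mem_filter.mp hb').2⟩
            have e3 : ∑ w ∈ F, (if w = z then 1 else 0) = 1 := by
              rw [Finset.sum_ite_eq' F z (fun _ => 1)]
              simp [hzF]
            omega

/-- If K is a k-clique of G each of whose edges has a distinguisher, then there is an
induced subgraph H ⊇ K on at most 2k − 1 vertices and a cost function of total cost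
2k − 1 such that every hitting set of H has cost at least k − 1. -/
theorem stmt_16 [Fintype V] [DecidableEq V] (G : SimpleGraph V) (k : ℕ) (K : Finset V)
    (hK : G.IsClique (↑K : Set V)) (hcard : K.card = k)
    (hdisting : ∀ a ∈ K, ∀ b ∈ K, a ≠ b → ∃ z : V, z ≠ a ∧ z ≠ b ∧
      ((G.Adj z a ∧ ¬ G.Adj z b) ∨ (¬ G.Adj z a ∧ G.Adj z b))) :
    ∃ (W : Finset V) (cH : V → ℕ), K ⊆ W ∧ W.card ≤ 2 * k - 1 ∧
      (∑ w ∈ W, cH w = 2 * k - 1) ∧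
      ∀ X : Finset V, X ⊆ W →
        IsClusterGraph (G.induce ((↑W : Set V) \ (↑X : Set V))) →
        k - 1 ≤ ∑ w ∈ X, cH w := by
  rcases Nat.eq_zero_or_pos k with hk | hk
  · subst hk
    have hKe : K = ∅ := Finset.card_eq_zero.mp hcard
    exact ⟨∅, fun _ => 0, by simp [hKe], by simp, by simp, fun X _ _ => by simp⟩
  · obtain ⟨D, c, hDK, hDcard, hDsum, hczero, hkey⟩ :=
      aux_sep G K hK hdisting K le_rfl (Finset.card_pos.mp (by omega))
    rw [hcard] at hDcard hDsum
    refine ⟨K ∪ D, fun v => c v + (if v ∈ K then 1 else 0), Finset.subset_union_left, ?_, ?_, ?_⟩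
    · have h1 := Finset.card_union_le K D
      omega
    · have e1 : ∑ v ∈ K ∪ D, c v = ∑ v ∈ D, c v :=
        (Finset.sum_subset Finset.subset_union_right (fun x _ hx => hczero x hx)).symm
      have e2 : ∑ v ∈ K ∪ D, (if v ∈ K then 1 else 0) = K.card := by
        rw [Finset.sum_ite_mem, Finset.union_inter_cancel_left, Finset.sum_const, smul_eq_mul,
          mul_one]
      rw [Finset.sum_add_distrib, e1, e2]
      omega
    · intro X hXW hcl
      set T := K \ X with hTdef
      have hcardT : (K ∩ X).card + T.card = K.card := Finset.card_inter_add_card_sdiff K X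
      have hkT := hkey T Finset.sdiff_subset
      set F := D.filter (fun w => ∃ a ∈ T, ∃ b ∈ T,
        ((G.Adj w a ∧ ¬ G.Adj w b) ∨ (¬ G.Adj w a ∧ G.Adj w b))) with hFdef
      have hFX : F ⊆ X := by
        intro w hw
        by_contra hwX
        obtain ⟨hwD, a, ha, b, hb, hsep⟩ := Finset.mem_filter.mp hw
        have haK : a ∈ K := (Finset.mem_sdiff.mp ha).1
        have hbK : b ∈ K := (Finset.mem_sdiff.mp hb).1
        have haX : a ∉ X := (Finset.mem_sdiff.mp ha).2
        have hbX : b ∉ X := (Finset.mem_sdiff.mp hb).2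
        have hab : a ≠ b := by
          rintro rfl
          rcases hsep with ⟨h1, h2⟩ | ⟨h1, h2⟩ <;> tauto
        have hadj : G.Adj a b := hK haK hbK hab
        have hwK : w ∉ K := hDK w hwD
        set s : Set V := (↑(K ∪ D) : Set V) \ (↑X : Set V) with hsdef
        have hw' : w ∈ s := ⟨by simp [Finset.mem_union, hwD], by simpa using hwX⟩
        have ha' : a ∈ s := ⟨by simp [Finset.mem_union, haK], by simpa using haX⟩
        have hb' : b ∈ s := ⟨by simp [Finset.mem_union, hbK], by simpa using hbX⟩
        rcases hsep with ⟨h1, h2⟩ | ⟨h1, h2⟩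
        · have e1 : (G.induce s).Adj ⟨w, hw'⟩ ⟨a, ha'⟩ := h1
          have e2 : (G.induce s).Adj ⟨a, ha'⟩ ⟨b, hb'⟩ := hadj
          have hwb : w ≠ b := fun h => hwK (h ▸ hbK)
          have hne : (⟨w, hw'⟩ : s) ≠ ⟨b, hb'⟩ :=
            fun h => hwb (congrArg Subtype.val h)
          exact h2 (hcl _ _ hne (e1.reachable.trans e2.reachable))
        · have e1 : (G.induce s).Adj ⟨w, hw'⟩ ⟨b, hb'⟩ := h2
          have e2 : (G.induce s).Adj ⟨b, hb'⟩ ⟨a, ha'⟩ := hadj.symm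
          have hwa : w ≠ a := fun h => hwK (h ▸ haK)
          have hne : (⟨w, hw'⟩ : s) ≠ ⟨a, ha'⟩ :=
            fun h => hwa (congrArg Subtype.val h)
          exact h1 (hcl _ _ hne (e1.reachable.trans e2.reachable))
      have hFsum : ∑ w ∈ F, c w ≤ ∑ w ∈ X, c w := Finset.sum_le_sum_of_subset hFX
      have e2 : ∑ v ∈ X, (if v ∈ K then 1 else 0) = (X ∩ K).card := by
        rw [Finset.sum_ite_mem, Finset.sum_const, smul_eq_mul, mul_one]
      have hXK : (X ∩ K).card = (K ∩ X).card := by rw [Finset.inter_comm]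
      have hsplit : ∑ w ∈ X, (c w + (if w ∈ K then 1 else 0)) =
          ∑ w ∈ X, c w + ∑ w ∈ X, (if w ∈ K then 1 else 0) := Finset.sum_add_distrib
      change k - 1 ≤ ∑ w ∈ X, (c w + (if w ∈ K then 1 else 0))
      omega
end

section
/- Let G be a graph, v_0 a vertex whose neighborhood N(v_0) = {v_1, …, v_k} is a stable set of size k ≥ 1, and let H be the star induced by {v_0, v_1, …, v_k}. Define c(v_0) = k − 1 and c(v_i) = 1 for i = 1, …, k. Then every hitting set X of H satisfies c(X) ≥ k − 1; i.e., the star inequality (k−1)x_{v_0} + Σ_{i=1}^k x_{v_i} ≥ k − 1 is valid for the hitting set polytope of H. -/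
variable {V : Type*}

/-- Star inequality: in the star K_{1,k} with center v₀ (cost k − 1) and k leaves
(cost 1 each), every hitting set has cost at least k − 1. -/
theorem stmt_17 [Fintype V] [DecidableEq V] (G : SimpleGraph V) (v0 : V) (k : ℕ)
    (hk : 1 ≤ k) (hcard : Fintype.card V = k + 1)
    (hcenter : ∀ w, w ≠ v0 → G.Adj v0 w)
    (hstable : ∀ a b : V, a ≠ v0 → b ≠ v0 → ¬ G.Adj a b)
    (c : V → ℕ) (hc0 : c v0 = k - 1) (hc1 : ∀ w, w ≠ v0 → c w = 1) :
    ∀ X : Finset V, IsHittingSet G ↑X → k - 1 ≤ ∑ w ∈ X, c w := by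

  intro X hX
  by_cases hv : v0 ∈ X
  · calc k - 1 = c v0 := hc0.symm
      _ ≤ ∑ w ∈ X, c w := Finset.single_le_sum (fun _ _ => Nat.zero_le _) hv
  · -- v0 ∉ X; all but at most one leaf in X
    set L : Finset V := Finset.univ.erase v0 with hL
    have hLcard : L.card = k := by
      simp [hL, Finset.card_erase_of_mem, hcard]
    have hsub : (L \ X).card ≤ 1 := by
      by_contra h
      push_neg at h
      obtain ⟨a, ha, b, hb, hab⟩ := Finset.one_lt_card.mp h
      simp only [Finset.mem_sdiff, hL, Finset.mem_erase, Finset.mem_univ, and_true] at ha hb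
      have hv0X : v0 ∈ (↑X : Set V)ᶜ := by simpa using hv
      have haX : a ∈ (↑X : Set V)ᶜ := by simpa using ha.2
      have hbX : b ∈ (↑X : Set V)ᶜ := by simpa using hb.2
      have hadj1 : (G.induce (↑X : Set V)ᶜ).Adj ⟨a, haX⟩ ⟨v0, hv0X⟩ :=
        (hcenter a ha.1).symm
      have hadj2 : (G.induce (↑X : Set V)ᶜ).Adj ⟨v0, hv0X⟩ ⟨b, hbX⟩ :=
        hcenter b hb.1
      have hreach := hadj1.reachable.trans hadj2.reachable
      have hne : (⟨a, haX⟩ : ↥((↑X : Set V)ᶜ)) ≠ ⟨b, hbX⟩ := by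
        simp [Subtype.ext_iff, hab]
      have := hX _ _ hne hreach
      exact hstable a b ha.1 hb.1 this
    have hinter : k - 1 ≤ (L ∩ X).card := by
      have : L.card ≤ (L \ X).card + (L ∩ X).card := by
        rw [Finset.card_sdiff_add_card_inter]
      omega
    calc k - 1 ≤ (L ∩ X).card := hinter
      _ = ∑ w ∈ L ∩ X, c w := by
          rw [Finset.card_eq_sum_ones]
          refine Finset.sum_congr rfl fun w hw => ?_
          have : w ≠ v0 := (Finset.mem_erase.mp (Finset.mem_inter.mp hw).1).1
          rw [hc1 w this]
      _ ≤ ∑ w ∈ X, c w :=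
          Finset.sum_le_sum_of_subset (Finset.inter_subset_right)
end

section
/- Let G be a graph with two true twins u, u', let G' = G − u', and define c'(u) = c(u) + c(u') and c'(w) = c(w) for other vertices w. If X' is a hitting set of G' with u ∉ X', then X' is a hitting set of G with c(X') ≤ c'(X'); if u ∈ X', then X' ∪ {u'} is a hitting set of G with c(X' ∪ {u'}) = c'(X'). In both cases OPT(G,c) ≤ OPT(G',c'), and conversely OPT(G',c') ≤ OPT(G,c). -/
variable {V : Type*}

lemma cluster_anti (G : SimpleGraph V) {A B : Set V} (hAB : A ⊆ B)
    (hB : IsClusterGraph (G.induce B)) : IsClusterGraph (G.induce A) := by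
  intro x y hxy hr
  let f : G.induce A →g G.induce B := ⟨fun v => ⟨v.1, hAB v.2⟩, fun h => h⟩
  have hr' : (G.induce B).Reachable ⟨x.1, hAB x.2⟩ ⟨y.1, hAB y.2⟩ := hr.map f
  exact hB _ _ (fun he => hxy (Subtype.ext (Subtype.mk_eq_mk.mp he))) hr'

lemma cluster_iso {W W' : Type*} {H : SimpleGraph W} {K : SimpleGraph W'}
    (e : H ≃g K) (h : IsClusterGraph H) : IsClusterGraph K := by
  intro a b hab hr
  have h2 := h (e.symm a) (e.symm b) (fun he => hab (e.symm.injective he))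
    (hr.map e.symm.toHom)
  exact e.symm.map_rel_iff.mp h2

def transferIso (G : SimpleGraph V) (u' : V) (A : Set V) (hA : u' ∉ A) :
    (G.comap (Subtype.val : {w : V // w ≠ u'} → V)).induce
      (Subtype.val ⁻¹' A) ≃g G.induce A where
  toFun x := ⟨x.1.1, x.2⟩
  invFun v := ⟨⟨v.1, fun h => hA (h ▸ v.2)⟩, v.2⟩
  left_inv x := rfl
  right_inv v := rfl
  map_rel_iff' := Iff.rfl

lemma twin_insert (G : SimpleGraph V) (u u' : V) (h1 : G.Adj u u')
    (h2 : ∀ w, w ≠ u → w ≠ u' → (G.Adj u w ↔ G.Adj u' w))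
    (B : Set V) (hu : u ∈ B)
    (hB : IsClusterGraph (G.induce B)) :
    IsClusterGraph (G.induce (insert u' B)) := by
  classical
  have memσ : ∀ x : ↑(insert u' B), (if (x : V) = u' then u else (x : V)) ∈ B := by
    intro x
    by_cases hx : (x : V) = u'
    · simpa [hx] using hu
    · simp only [if_neg hx]
      rcases x.2 with h | h
      · exact absurd h hx
      · exact h
  have edge : ∀ x z : V, G.Adj x z →
      (if x = u' then u else x) ≠ (if z = u' then u else z) →
      G.Adj (if x = u' then u else x) (if z = u' then u else z) := by
    intro x z hadj hne'
    by_cases hx : x = u' <;> by_cases hz : z = u'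
    · exact absurd (hx.trans hz.symm) hadj.ne
    · subst hx
      simp only [if_pos rfl, if_neg hz] at hne' ⊢
      exact (h2 z (fun h => hne' h.symm) hz).mpr hadj
    · subst hz
      simp only [if_neg hx, if_pos rfl] at hne' ⊢
      exact ((h2 x hne' hx).mpr hadj.symm).symm
    · simp only [if_neg hx, if_neg hz]
      exact hadj
  have key : ∀ {x y : ↑(insert u' B)}, (G.induce (insert u' B)).Walk x y →
      ∀ (a b : ↑B), (a : V) = (if (x : V) = u' then u else (x : V)) →
        (b : V) = (if (y : V) = u' then u else (y : V)) →
        (G.induce B).Reachable a b := by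
    intro x y p
    induction p with
    | nil =>
      intro a b ha hb
      have : a = b := Subtype.ext (ha.trans hb.symm)
      exact this ▸ SimpleGraph.Reachable.refl a
    | @cons x z y h p ih =>
      intro a b ha hb
      have hzB := memσ z
      by_cases heq : (if (x : V) = u' then u else (x : V)) = (if (z : V) = u' then u else (z : V))
      · exact ih a b (ha.trans heq) hb
      · have hadj : (G.induce B).Adj a ⟨_, hzB⟩ := by
          show G.Adj (a : V) _
          rw [ha]
          exact edge _ _ h heq
        exact (SimpleGraph.Adj.reachable hadj).trans (ih ⟨_, hzB⟩ b rfl hb)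
  intro x y hxy hr
  obtain ⟨p⟩ := hr
  by_cases hx : (x : V) = u' <;> by_cases hy : (y : V) = u'
  · exact absurd (Subtype.ext (hx.trans hy.symm)) hxy
  · -- x = u', y ≠ u'
    have hyB : (y : V) ∈ B := by
      rcases y.2 with h | h
      · exact absurd h hy
      · exact h
    show G.Adj (x : V) (y : V)
    rw [hx]
    by_cases hyu : (y : V) = u
    · rw [hyu]; exact h1.symm
    · have hr' := key p ⟨u, hu⟩ ⟨(y : V), hyB⟩ (by simp [hx]) (by simp [hy])
      have hadj := hB _ _ (fun he => hyu (congrArg Subtype.val he).symm) hr'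
      exact (h2 (y : V) hyu hy).mp hadj
  · -- y = u', x ≠ u'
    have hxB : (x : V) ∈ B := by
      rcases x.2 with h | h
      · exact absurd h hx
      · exact h
    show G.Adj (x : V) (y : V)
    rw [hy]
    by_cases hxu : (x : V) = u
    · rw [hxu]; exact h1
    · have hr' := key p ⟨(x : V), hxB⟩ ⟨u, hu⟩ (by simp [hx]) (by simp [hy])
      have hadj := hB _ _ (fun he => hxu (congrArg Subtype.val he)) hr'
      exact ((h2 (x : V) hxu hx).mp hadj.symm).symm
  · have hxB : (x : V) ∈ B := by
      rcases x.2 with h | h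
      · exact absurd h hx
      · exact h
    have hyB : (y : V) ∈ B := by
      rcases y.2 with h | h
      · exact absurd h hy
      · exact h
    have hr' := key p ⟨(x : V), hxB⟩ ⟨(y : V), hyB⟩ (by simp [hx]) (by simp [hy])
    exact hB _ _ (fun he => hxy (Subtype.ext (Subtype.mk_eq_mk.mp he))) hr'

section Main

variable [Fintype V] [DecidableEq V]

lemma partA (G : SimpleGraph V) (u u' : V) (h1 : G.Adj u u')
    (h2 : ∀ w, w ≠ u → w ≠ u' → (G.Adj u w ↔ G.Adj u' w)) (c : V → ℕ)
    (X' : Finset {w : V // w ≠ u'})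
    (hX' : IsHittingSet (G.comap (Subtype.val : {w : V // w ≠ u'} → V)) ↑X') :
    ((⟨u, h1.ne⟩ : {w : V // w ≠ u'}) ∉ X' →
      IsHittingSet G ↑(X'.image Subtype.val) ∧
      ∑ w ∈ X'.image Subtype.val, c w ≤
        ∑ w ∈ X', (if w.1 = u then c u + c u' else c w.1)) ∧
    ((⟨u, h1.ne⟩ : {w : V // w ≠ u'}) ∈ X' →
      IsHittingSet G ↑(insert u' (X'.image Subtype.val)) ∧
      ∑ w ∈ insert u' (X'.image Subtype.val), c w =
        ∑ w ∈ X', (if w.1 = u then c u + c u' else c w.1)) := by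
  have hmemim : ∀ v : V, v ∈ X'.image Subtype.val ↔ ∃ h : v ≠ u', (⟨v, h⟩ : {w : V // w ≠ u'}) ∈ X' := by
    intro v
    simp only [Finset.mem_image]
    constructor
    · rintro ⟨a, ha, rfl⟩; exact ⟨a.2, by simpa using ha⟩
    · rintro ⟨h, hm⟩; exact ⟨⟨v, h⟩, hm, rfl⟩
  have hu'im : u' ∉ X'.image Subtype.val := by
    rw [hmemim]; rintro ⟨h, -⟩; exact h rfl
  have himsum : ∑ w ∈ X'.image Subtype.val, c w = ∑ w ∈ X', c w.1 :=
    Finset.sum_image (fun a _ b _ h => Subtype.ext h)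
  constructor
  · intro hu
    have huim : u ∉ X'.image Subtype.val := by
      rw [hmemim]; rintro ⟨h, hm⟩; exact hu hm
    constructor
    · set B : Set V := (↑(X'.image Subtype.val) : Set V)ᶜ \ {u'} with hBdef
      have hu'B : u' ∉ B := fun h => h.2 rfl
      have hpre : Subtype.val ⁻¹' B = (↑X' : Set {w : V // w ≠ u'})ᶜ := by
        ext w
        simp only [Set.mem_preimage, hBdef, Set.mem_diff, Set.mem_compl_iff,
          Finset.mem_coe, Set.mem_singleton_iff, hmemim]
        constructor
        · rintro ⟨h, -⟩ hm; exact h ⟨w.2, by simpa using hm⟩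
        · intro h; exact ⟨fun ⟨hne, hm⟩ => h (by simpa using hm), w.2⟩
      have hB : IsClusterGraph (G.induce B) :=
        cluster_iso (transferIso G u' B hu'B) (by rw [hpre]; exact hX')
      show IsClusterGraph (G.induce (↑(X'.image Subtype.val) : Set V)ᶜ)
      have hins : insert u' B = (↑(X'.image Subtype.val) : Set V)ᶜ := by
        rw [hBdef, Set.insert_diff_singleton, Set.insert_eq_self.mpr (by exact hu'im)]
      rw [← hins]
      exact twin_insert G u u' h1 h2 B ⟨huim, by simpa using h1.ne⟩ hB
    · rw [himsum]
      refine Finset.sum_le_sum fun w hw => ?_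
      by_cases hwu : w.1 = u
      · exact absurd ((Subtype.ext hwu : w = ⟨u, h1.ne⟩) ▸ hw) hu
      · simp [hwu]
  · intro hu
    constructor
    · set A : Set V := (↑(insert u' (X'.image Subtype.val)) : Set V)ᶜ with hAdef
      have hu'A : u' ∉ A := by
        simp [hAdef]
      have hpre : Subtype.val ⁻¹' A = (↑X' : Set {w : V // w ≠ u'})ᶜ := by
        ext w
        simp only [Set.mem_preimage, hAdef, Set.mem_compl_iff, Finset.coe_insert,
          Set.mem_insert_iff, Finset.mem_coe, hmemim, not_or]
        constructor
        · rintro ⟨-, h⟩ hm; exact h ⟨w.2, by simpa using hm⟩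
        · intro h; exact ⟨w.2, fun ⟨hne, hm⟩ => h (by simpa using hm)⟩
      show IsClusterGraph (G.induce A)
      exact cluster_iso (transferIso G u' A hu'A) (by rw [hpre]; exact hX')
    · rw [Finset.sum_insert hu'im, himsum]
      have hsplit : ∑ w ∈ X', (if w.1 = u then c u + c u' else c w.1) =
          ∑ w ∈ X', (c w.1 + if w = (⟨u, h1.ne⟩ : {w : V // w ≠ u'}) then c u' else 0) := by
        refine Finset.sum_congr rfl fun w _ => ?_
        by_cases hwu : w.1 = u
        · rw [if_pos hwu, if_pos (Subtype.ext hwu), hwu]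
        · rw [if_neg hwu, if_neg (fun h => hwu (congrArg Subtype.val h)), Nat.add_zero]
      rw [hsplit, Finset.sum_add_distrib, Finset.sum_ite_eq' X' (⟨u, h1.ne⟩ : {w : V // w ≠ u'}),
        if_pos hu, Nat.add_comm]

end Main

section Main2

variable [Fintype V] [DecidableEq V]

lemma partB (G : SimpleGraph V) (u u' : V) (h1 : G.Adj u u')
    (h2 : ∀ w, w ≠ u → w ≠ u' → (G.Adj u w ↔ G.Adj u' w)) (c : V → ℕ)
    (X : Finset V) (hX : IsHittingSet G ↑X) :
    ∃ X' : Finset {w : V // w ≠ u'},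
      IsHittingSet (G.comap (Subtype.val : {w : V // w ≠ u'} → V)) ↑X' ∧
      ∑ w ∈ X', (if w.1 = u then c u + c u' else c w.1) ≤ ∑ v ∈ X, c v := by
  classical
  have subty_sum : ∀ Y : Finset V, u ∉ Y →
      ∑ w ∈ Y.subtype (· ≠ u'), (if w.1 = u then c u + c u' else c w.1) =
        ∑ v ∈ Y.filter (· ≠ u'), c v := by
    intro Y hu
    rw [← Finset.sum_subtype_eq_sum_filter]
    refine Finset.sum_congr rfl fun w hw => ?_
    have : w.1 ≠ u := fun h => hu (h ▸ (Finset.mem_subtype.mp hw))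
    rw [if_neg this]
  have hit_subty : ∀ Y : Finset V, IsHittingSet G ↑Y → u' ∉ Y →
      IsHittingSet (G.comap (Subtype.val : {w : V // w ≠ u'} → V)) ↑(Y.subtype (· ≠ u')) := by
    intro Y hY hu'
    set B : Set V := (↑Y : Set V)ᶜ \ {u'} with hBdef
    have hu'B : u' ∉ B := fun h => h.2 rfl
    have hpre : Subtype.val ⁻¹' B = (↑(Y.subtype (· ≠ u')) : Set {w : V // w ≠ u'})ᶜ := by
      ext w
      simp only [Set.mem_preimage, hBdef, Set.mem_diff, Set.mem_compl_iff, Finset.mem_coe,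
        Set.mem_singleton_iff, Finset.mem_subtype]
      exact ⟨fun h => h.1, fun h => ⟨h, w.2⟩⟩
    show IsClusterGraph _
    rw [← hpre]
    exact cluster_iso (transferIso G u' B hu'B).symm (cluster_anti G Set.diff_subset hY)
  have neither : ∀ Y : Finset V, IsHittingSet G ↑Y → u ∉ Y → u' ∉ Y →
      ∃ X' : Finset {w : V // w ≠ u'},
        IsHittingSet (G.comap (Subtype.val : {w : V // w ≠ u'} → V)) ↑X' ∧
        ∑ w ∈ X', (if w.1 = u then c u + c u' else c w.1) = ∑ v ∈ Y, c v := by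
    intro Y hY hu hu'
    refine ⟨Y.subtype (· ≠ u'), hit_subty Y hY hu', ?_⟩
    rw [subty_sum Y hu, Finset.filter_ne', Finset.erase_eq_of_notMem hu']
  have erase_compl : ∀ (Y : Finset V) (a : V), (↑(Y.erase a) : Set V)ᶜ = insert a (↑Y : Set V)ᶜ := by
    intro Y a
    ext v
    simp only [Set.mem_compl_iff, Finset.mem_coe, Finset.mem_erase, Set.mem_insert_iff, not_and]
    by_cases hva : v = a <;> simp [hva]
  by_cases hu : u ∈ X <;> by_cases hu' : u' ∈ X
  · -- both
    refine ⟨X.subtype (· ≠ u'), ?_, ?_⟩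
    · set A : Set V := (↑X : Set V)ᶜ with hAdef
      have hu'A : u' ∉ A := fun h => h hu'
      have hpre : Subtype.val ⁻¹' A = (↑(X.subtype (· ≠ u')) : Set {w : V // w ≠ u'})ᶜ := by
        ext w
        simp only [Set.mem_preimage, hAdef, Set.mem_compl_iff, Finset.mem_coe,
          Finset.mem_subtype]
      show IsClusterGraph _
      rw [← hpre]
      exact cluster_iso (transferIso G u' A hu'A).symm hX
    · have hsp : ∑ w ∈ X.subtype (· ≠ u'), (if w.1 = u then c u + c u' else c w.1) =
          ∑ w ∈ X.subtype (· ≠ u'),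
            (c w.1 + if w = (⟨u, h1.ne⟩ : {w : V // w ≠ u'}) then c u' else 0) := by
        refine Finset.sum_congr rfl fun w _ => ?_
        by_cases hwu : w.1 = u
        · rw [if_pos hwu, if_pos (Subtype.ext hwu), hwu]
        · rw [if_neg hwu, if_neg (fun h => hwu (congrArg Subtype.val h)), Nat.add_zero]
      rw [hsp, Finset.sum_add_distrib,
        Finset.sum_ite_eq' (X.subtype (· ≠ u')) (⟨u, h1.ne⟩ : {w : V // w ≠ u'}),
        if_pos (Finset.mem_subtype.mpr hu), Finset.sum_subtype_eq_sum_filter,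
        Finset.filter_ne', Finset.sum_erase_add X c hu']
  · -- u only : erase u
    have hYhit : IsHittingSet G ↑(X.erase u) := by
      show IsClusterGraph _
      rw [erase_compl X u]
      exact twin_insert G u' u h1.symm (fun w hw1 hw2 => (h2 w hw2 hw1).symm)
        ((↑X : Set V)ᶜ) (by simpa using hu') hX
    obtain ⟨X', hX'hit, hX'sum⟩ := neither (X.erase u) hYhit (Finset.notMem_erase u X)
      (fun h => hu' (Finset.mem_of_mem_erase h))
    exact ⟨X', hX'hit, hX'sum.le.trans (Finset.sum_le_sum_of_subset (Finset.erase_subset u X))⟩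
  · -- u' only : erase u'
    have hYhit : IsHittingSet G ↑(X.erase u') := by
      show IsClusterGraph _
      rw [erase_compl X u']
      exact twin_insert G u u' h1 h2 ((↑X : Set V)ᶜ) (by simpa using hu) hX
    obtain ⟨X', hX'hit, hX'sum⟩ := neither (X.erase u') hYhit
      (fun h => hu (Finset.mem_of_mem_erase h)) (Finset.notMem_erase u' X)
    exact ⟨X', hX'hit, hX'sum.le.trans (Finset.sum_le_sum_of_subset (Finset.erase_subset u' X))⟩
  · obtain ⟨X', hX'hit, hX'sum⟩ := neither X hX hu hu'
    exact ⟨X', hX'hit, hX'sum.le⟩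

end Main2

lemma univ_hitting {W : Type*} [Fintype W] (G : SimpleGraph W) :
    IsHittingSet G ↑(Finset.univ : Finset W) := by
  intro a b hab hr
  exact absurd a.2 (by simp)

lemma OPT_nonempty {W : Type*} [Fintype W] (G : SimpleGraph W) (c : W → ℕ) :
    {n | ∃ X : Finset W, IsHittingSet G ↑X ∧ ∑ v ∈ X, c v = n}.Nonempty :=
  ⟨_, Finset.univ, univ_hitting G, rfl⟩

/-- True-twin reduction: with G' = G − u' and c'(u) = c(u) + c(u'), c' = c elsewhere,
any hitting set X' of G' yields a hitting set of G (X' itself if u ∉ X', X' ∪ {u'}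
otherwise) of cost at most (resp. equal to) c'(X'); moreover OPT(G,c) = OPT(G',c'). -/
theorem stmt_19 [Fintype V] [DecidableEq V] (G : SimpleGraph V) (u u' : V)
    (htw : TrueTwinsIn G Set.univ u u') (c : V → ℕ) :
    (∀ X' : Finset {w : V // w ≠ u'},
      IsHittingSet (G.comap (Subtype.val : {w : V // w ≠ u'} → V)) ↑X' →
      ((⟨u, htw.2.2.1.ne⟩ : {w : V // w ≠ u'}) ∉ X' →
        IsHittingSet G ↑(X'.image Subtype.val) ∧
        ∑ w ∈ X'.image Subtype.val, c w ≤
          ∑ w ∈ X', (if w.1 = u then c u + c u' else c w.1)) ∧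
      ((⟨u, htw.2.2.1.ne⟩ : {w : V // w ≠ u'}) ∈ X' →
        IsHittingSet G ↑(insert u' (X'.image Subtype.val)) ∧
        ∑ w ∈ insert u' (X'.image Subtype.val), c w =
          ∑ w ∈ X', (if w.1 = u then c u + c u' else c w.1))) ∧
    OPT G c = OPT (G.comap (Subtype.val : {w : V // w ≠ u'} → V))
      (fun w => if w.1 = u then c u + c u' else c w.1) := by
  classical
  have h1 : G.Adj u u' := htw.2.2.1
  have h2 : ∀ w, w ≠ u → w ≠ u' → (G.Adj u w ↔ G.Adj u' w) :=
    fun w hw hw' => htw.2.2.2 w (Set.mem_univ w) hw hw'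
  refine ⟨fun X' hX' => partA G u u' h1 h2 c X' hX', ?_⟩
  set G' := G.comap (Subtype.val : {w : V // w ≠ u'} → V) with hG'
  set c' : {w : V // w ≠ u'} → ℕ := fun w => if w.1 = u then c u + c u' else c w.1 with hc'
  apply le_antisymm
  · -- OPT G c ≤ OPT G' c'
    obtain ⟨X', hX'hit, hX'sum⟩ := Nat.sInf_mem (OPT_nonempty G' c')
    by_cases hu : (⟨u, h1.ne⟩ : {w : V // w ≠ u'}) ∈ X'
    · obtain ⟨hhit, hsum⟩ := (partA G u u' h1 h2 c X' hX'hit).2 hu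
      calc OPT G c ≤ ∑ w ∈ insert u' (X'.image Subtype.val), c w :=
            Nat.sInf_le ⟨insert u' (X'.image Subtype.val), hhit, rfl⟩
        _ = OPT G' c' := by rw [hsum]; exact hX'sum
    · obtain ⟨hhit, hsum⟩ := (partA G u u' h1 h2 c X' hX'hit).1 hu
      calc OPT G c ≤ ∑ w ∈ X'.image Subtype.val, c w :=
            Nat.sInf_le ⟨X'.image Subtype.val, hhit, rfl⟩
        _ ≤ OPT G' c' := hsum.trans hX'sum.le
  · -- OPT G' c' ≤ OPT G c
    obtain ⟨X, hXhit, hXsum⟩ := Nat.sInf_mem (OPT_nonempty G c)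
    obtain ⟨X', hX'hit, hX'sum⟩ := partB G u u' h1 h2 c X hXhit
    calc OPT G' c' ≤ ∑ w ∈ X', c' w := Nat.sInf_le ⟨X', hX'hit, rfl⟩
      _ ≤ ∑ v ∈ X, c v := hX'sum
      _ = OPT G c := hXsum
end
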